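/- arXiv:1803.01338 — 2 statements merged into one kernel-verified Lean document; each statement's English description precedes it below -/
import Mathlib

section
/- Fix a real number α with 0 < α < 1/2. Let (γ,d) be a graphical two-class PAM instance on n vertices such that |V_1| ≥ αn, |V_2| ≥ αn, 2 ≤ d_i and d_i² ≤ αn/4 for all vertices i (i.e., d_i ≤ √(αn/4)), and 1 ≤ γ ≤ αn/2. Then for every G ∈ G'(γ,d) there exists a sequence of graphs G = G_0, G_1, …, G_t with t ≤ 9 such that every G_i belongs to G'(γ,d), each G_{i+1} is obtained from G_i by a hinge flip, and G_t ∈ G(γ,d). In other words, this family of instances is strongly stable with constant k = 9 for the hinge-flip chain. -/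
open SimpleGraph
open scoped symmDiff

/-- The degree of vertex `v` in graph `G`. -/
noncomputable def deg {n : ℕ} (G : SimpleGraph (Fin n)) (v : Fin n) : ℕ :=
  (G.neighborSet v).ncard

/-- The number of cut edges of `G`: edges with one endpoint in the class `V₁`
and one endpoint in the class `V₂ = V₁ᶜ`. -/
noncomputable def cutCount {n : ℕ} (V1 : Finset (Fin n)) (G : SimpleGraph (Fin n)) : ℕ :=
  {e ∈ G.edgeSet | ∃ u v : Fin n, e = s(u, v) ∧ u ∈ V1 ∧ v ∉ V1}.ncard

/-- The number of internal edges of `G` inside `V₁`. -/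
noncomputable def intCount1 {n : ℕ} (V1 : Finset (Fin n)) (G : SimpleGraph (Fin n)) : ℕ :=
  {e ∈ G.edgeSet | ∃ u v : Fin n, e = s(u, v) ∧ u ∈ V1 ∧ v ∈ V1}.ncard

/-- The number of internal edges of `G` inside `V₂ = V₁ᶜ`. -/
noncomputable def intCount2 {n : ℕ} (V1 : Finset (Fin n)) (G : SimpleGraph (Fin n)) : ℕ :=
  {e ∈ G.edgeSet | ∃ u v : Fin n, e = s(u, v) ∧ u ∉ V1 ∧ v ∉ V1}.ncard

/-- `G ∈ 𝒢(γ,d)`: vertex `i` has degree `d i` for every `i`, and `G` has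
exactly `γ` cut edges. -/
def memPAM {n : ℕ} (V1 : Finset (Fin n)) (γ : ℕ) (d : Fin n → ℕ)
    (G : SimpleGraph (Fin n)) : Prop :=
  (∀ v, deg G v = d v) ∧ cutCount V1 G = γ

/-- `G ∈ 𝒢'(γ,d)`: the degree sequence `d'` of `G` and its number `γ'` of cut
edges satisfy `Σ d'ᵢ = Σ dᵢ`, `Σ |dᵢ − d'ᵢ| ≤ 4`, and `|γ' − γ| ≤ 1`. -/
def memPAM' {n : ℕ} (V1 : Finset (Fin n)) (γ : ℕ) (d : Fin n → ℕ)
    (G : SimpleGraph (Fin n)) : Prop :=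
  (∑ v, deg G v = ∑ v, d v) ∧
  (∑ v, |(d v : ℤ) - (deg G v : ℤ)| ≤ 4) ∧
  |(cutCount V1 G : ℤ) - (γ : ℤ)| ≤ 1

/-- A hinge flip: replace an edge `{i,j}` of `G` by a non-edge `{j,k}`. -/
def hingeFlip {n : ℕ} (G H : SimpleGraph (Fin n)) : Prop :=
  ∃ i j k : Fin n, G.Adj i j ∧ j ≠ k ∧ ¬ G.Adj j k ∧
    H = (G.deleteEdges {s(i, j)}) ⊔ fromEdgeSet {s(j, k)}


attribute [local instance] Classical.propDecidable

namespace PamAux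


variable {n : ℕ}

/-- cut predicate on unordered pairs -/
def cutP (V1 : Finset (Fin n)) (e : Sym2 (Fin n)) : Prop :=
  ∃ u v : Fin n, e = s(u, v) ∧ u ∈ V1 ∧ v ∉ V1

lemma cutP_iff (V1 : Finset (Fin n)) (a b : Fin n) :
    cutP V1 s(a, b) ↔ ((a ∈ V1 ∧ b ∉ V1) ∨ (b ∈ V1 ∧ a ∉ V1)) := by
  constructor
  · rintro ⟨u, v, he, hu, hv⟩
    rw [Sym2.eq_iff] at he
    rcases he with ⟨rfl, rfl⟩ | ⟨rfl, rfl⟩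
    · exact Or.inl ⟨hu, hv⟩
    · exact Or.inr ⟨hu, hv⟩
  · rintro (⟨ha, hb⟩ | ⟨hb, ha⟩)
    · exact ⟨a, b, rfl, ha, hb⟩
    · exact ⟨b, a, Sym2.eq_swap, hb, ha⟩

lemma cutCount_eq (V1 : Finset (Fin n)) (G : SimpleGraph (Fin n)) :
    cutCount V1 G = {e ∈ G.edgeSet | cutP V1 e}.ncard := rfl

/-- the graph after a hinge flip -/
def flipG (G : SimpleGraph (Fin n)) (i j k : Fin n) : SimpleGraph (Fin n) :=
  (G.deleteEdges {s(i, j)}) ⊔ fromEdgeSet {s(j, k)}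

lemma flip_adj (G : SimpleGraph (Fin n)) (i j k a b : Fin n) :
    (flipG G i j k).Adj a b ↔
      (G.Adj a b ∧ s(a, b) ≠ s(i, j)) ∨ (s(a, b) = s(j, k) ∧ a ≠ b) := by
  simp [flipG, SimpleGraph.deleteEdges_adj, SimpleGraph.fromEdgeSet_adj, Set.mem_singleton_iff]

section Flip

variable {G : SimpleGraph (Fin n)} {i j k : Fin n}
variable (hij : G.Adj i j) (hjk : j ≠ k) (hnjk : ¬ G.Adj j k)

include hij hjk hnjk

lemma flip_ik : i ≠ k := by
  rintro rfl; exact hnjk hij.symm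

lemma flip_hinge : hingeFlip G (flipG G i j k) :=
  ⟨i, j, k, hij, hjk, hnjk, rfl⟩

lemma flip_nbr_i :
    (flipG G i j k).neighborSet i = G.neighborSet i \ {j} := by
  have hik : i ≠ k := flip_ik hij hjk hnjk
  have hii : i ≠ j := hij.ne
  ext u
  rw [SimpleGraph.mem_neighborSet, flip_adj]
  simp only [Sym2.eq_iff, Set.mem_diff, Set.mem_singleton_iff, SimpleGraph.mem_neighborSet]
  aesop

lemma flip_nbr_j :
    (flipG G i j k).neighborSet j = insert k (G.neighborSet j \ {i}) := by
  have hik : i ≠ k := flip_ik hij hjk hnjk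
  have hii : i ≠ j := hij.ne
  have hji : G.Adj j i := hij.symm
  ext u
  rw [SimpleGraph.mem_neighborSet, flip_adj]
  simp only [Sym2.eq_iff, Set.mem_insert_iff, Set.mem_diff, Set.mem_singleton_iff,
    SimpleGraph.mem_neighborSet]
  aesop

lemma flip_nbr_k :
    (flipG G i j k).neighborSet k = insert j (G.neighborSet k) := by
  have hik : i ≠ k := flip_ik hij hjk hnjk
  have hii : i ≠ j := hij.ne
  have hnkj : ¬ G.Adj k j := fun h => hnjk h.symm
  ext u
  rw [SimpleGraph.mem_neighborSet, flip_adj]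
  simp only [Sym2.eq_iff, Set.mem_insert_iff, SimpleGraph.mem_neighborSet]
  aesop

omit hij hjk hnjk in
lemma flip_nbr_other (v : Fin n) (hvi : v ≠ i) (hvj : v ≠ j) (hvk : v ≠ k) :
    (flipG G i j k).neighborSet v = G.neighborSet v := by
  ext u
  rw [SimpleGraph.mem_neighborSet, flip_adj]
  simp only [Sym2.eq_iff, SimpleGraph.mem_neighborSet]
  aesop

lemma flip_deg (v : Fin n) :
    ((deg (flipG G i j k) v : ℤ)) =
      (deg G v : ℤ) - (if v = i then 1 else 0) + (if v = k then 1 else 0) := by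
  have hik : i ≠ k := flip_ik hij hjk hnjk
  have hii : i ≠ j := hij.ne
  have hfin : ∀ (s : Set (Fin n)), s.Finite := fun s => Set.toFinite _
  by_cases hvi : v = i
  · rw [hvi, if_pos rfl, if_neg hik, deg, flip_nbr_i hij hjk hnjk,
      Set.ncard_diff_singleton_of_mem ((G.mem_neighborSet i j).mpr hij)]
    have h1 : 1 ≤ (G.neighborSet i).ncard :=
      Nat.one_le_iff_ne_zero.mpr (Nat.pos_iff_ne_zero.mp ((Set.ncard_pos (hfin _)).mpr ⟨j, (G.mem_neighborSet i j).mpr hij⟩))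
    rw [show deg G i = (G.neighborSet i).ncard from rfl]
    push_cast [Nat.cast_sub h1]
    ring
  · rw [if_neg hvi]
    by_cases hvj : v = j
    · rw [hvj, if_neg hjk, deg, flip_nbr_j hij hjk hnjk,
        Set.ncard_insert_of_notMem (by simp only [Set.mem_diff, Set.mem_singleton_iff, SimpleGraph.mem_neighborSet]; exact fun h => hnjk h.1) ((hfin _).diff),
        Set.ncard_diff_singleton_of_mem ((G.mem_neighborSet j i).mpr hij.symm)]
      have h1 : 1 ≤ (G.neighborSet j).ncard :=
        Nat.one_le_iff_ne_zero.mpr (Nat.pos_iff_ne_zero.mp ((Set.ncard_pos (hfin _)).mpr ⟨i, (G.mem_neighborSet j i).mpr hij.symm⟩))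
      rw [show deg G j = (G.neighborSet j).ncard from rfl]
      push_cast [Nat.cast_sub h1]
      ring
    · by_cases hvk : v = k
      · rw [hvk, if_pos rfl, deg, flip_nbr_k hij hjk hnjk,
          Set.ncard_insert_of_notMem (by simp only [SimpleGraph.mem_neighborSet]; exact fun h => hnjk h.symm) (hfin _)]
        rw [show deg G k = (G.neighborSet k).ncard from rfl]
        push_cast
        ring
      · rw [if_neg hvk, deg, flip_nbr_other v hvi hvj hvk]
        rw [show deg G v = (G.neighborSet v).ncard from rfl]
        push_cast
        ring

lemma flip_edgeSet :
    (flipG G i j k).edgeSet = (G.edgeSet \ {s(i, j)}) ∪ {s(j, k)} := by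
  have hik : i ≠ k := flip_ik hij hjk hnjk
  ext e
  induction e using Sym2.ind with
  | _ a b =>
    simp only [SimpleGraph.mem_edgeSet, flip_adj, Set.mem_union, Set.mem_diff,
      Set.mem_singleton_iff]
    constructor
    · rintro (⟨h, hne⟩ | ⟨he, hne⟩)
      · exact Or.inl ⟨h, hne⟩
      · exact Or.inr he
    · rintro (⟨h, hne⟩ | he)
      · exact Or.inl ⟨h, hne⟩
      · refine Or.inr ⟨he, ?_⟩
        rw [Sym2.eq_iff] at he
        rcases he with ⟨rfl, rfl⟩ | ⟨rfl, rfl⟩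
        · exact hjk
        · exact Ne.symm hjk

lemma flip_cut (V1 : Finset (Fin n)) :
    (cutCount V1 (flipG G i j k) : ℤ) =
      (cutCount V1 G : ℤ) - (if cutP V1 s(i, j) then 1 else 0)
        + (if cutP V1 s(j, k) then 1 else 0) := by
  have hfin : ∀ (s : Set (Sym2 (Fin n))), s.Finite := fun s => Set.toFinite _
  have he2 : s(j, k) ∉ G.edgeSet := hnjk
  have he12 : s(i, j) ≠ s(j, k) := by
    intro h
    rw [Sym2.eq_iff] at h
    rcases h with ⟨h1, -⟩ | ⟨h1, -⟩
    · exact hij.ne h1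
    · exact (flip_ik hij hjk hnjk) h1
  have hset : {e ∈ (flipG G i j k).edgeSet | cutP V1 e} =
      ({e ∈ G.edgeSet | cutP V1 e} \ {s(i, j)}) ∪ {e ∈ ({s(j, k)} : Set _) | cutP V1 e} := by
    rw [flip_edgeSet hij hjk hnjk]
    ext e
    simp only [Set.mem_setOf_eq, Set.mem_union, Set.mem_diff, Set.mem_singleton_iff,
      Set.mem_sep_iff]
    tauto
  rw [cutCount_eq, cutCount_eq, hset]
  have hd : (({e ∈ G.edgeSet | cutP V1 e} \ {s(i, j)}).ncard : ℤ) =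
      ({e ∈ G.edgeSet | cutP V1 e}.ncard : ℤ) - (if cutP V1 s(i, j) then 1 else 0) := by
    by_cases hc : cutP V1 s(i, j)
    · rw [if_pos hc, Set.ncard_diff_singleton_of_mem (Set.mem_sep_iff.mpr ⟨G.mem_edgeSet.mpr hij, hc⟩)]
      have h1 : 1 ≤ {e ∈ G.edgeSet | cutP V1 e}.ncard :=
        Nat.one_le_iff_ne_zero.mpr
          (Nat.pos_iff_ne_zero.mp ((Set.ncard_pos (hfin _)).mpr ⟨s(i, j), Set.mem_sep_iff.mpr ⟨G.mem_edgeSet.mpr hij, hc⟩⟩))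
      push_cast [Nat.cast_sub h1]
      ring
    · rw [if_neg hc]
      congr 2
      apply Set.diff_singleton_eq_self
      rintro ⟨-, hc'⟩
      exact hc hc'
  by_cases hc2 : cutP V1 s(j, k)
  · have : {e ∈ ({s(j, k)} : Set (Sym2 (Fin n))) | cutP V1 e} = {s(j, k)} := by
      ext e
      simp only [Set.mem_sep_iff, Set.mem_singleton_iff]
      exact ⟨fun h => h.1, fun h => ⟨h, h ▸ hc2⟩⟩
    rw [this, if_pos hc2]
    rw [Set.union_singleton, Set.ncard_insert_of_notMem
      (by rintro ⟨⟨hmem, -⟩, -⟩; exact he2 hmem) ((hfin _).diff)]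
    push_cast
    rw [hd]
  · have : {e ∈ ({s(j, k)} : Set (Sym2 (Fin n))) | cutP V1 e} = ∅ := by
      ext e
      simp only [Set.mem_sep_iff, Set.mem_singleton_iff, Set.mem_empty_iff_false, iff_false]
      rintro ⟨rfl, hc⟩
      exact hc2 hc
    rw [this, Set.union_empty, if_neg hc2, hd]
    ring

lemma flip_sum_deg :
    ∑ v, deg (flipG G i j k) v = ∑ v, deg G v := by
  have hik : i ≠ k := flip_ik hij hjk hnjk
  have : ((∑ v, deg (flipG G i j k) v : ℕ) : ℤ) = ((∑ v, deg G v : ℕ) : ℤ) := by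
    push_cast
    rw [Finset.sum_congr rfl (fun v _ => flip_deg hij hjk hnjk v)]
    rw [Finset.sum_add_distrib, Finset.sum_sub_distrib]
    simp [Finset.sum_ite_eq' Finset.univ]
  exact_mod_cast this

end Flip


section ReachSec

variable {n : ℕ} (V1 : Finset (Fin n)) (γ : ℕ) (d : Fin n → ℕ)

/-- sum of absolute degree deviations -/
noncomputable def devSum (d : Fin n → ℕ) (G : SimpleGraph (Fin n)) : ℤ :=
  ∑ v, |(d v : ℤ) - (deg G v : ℤ)|

def Reach (G G' : SimpleGraph (Fin n)) (c : ℕ) : Prop :=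
  ∃ t, t ≤ c ∧ ∃ f : ℕ → SimpleGraph (Fin n), f 0 = G ∧ f t = G' ∧
    (∀ i, i ≤ t → memPAM' V1 γ d (f i)) ∧ (∀ i, i < t → hingeFlip (f i) (f (i+1)))

variable {V1 γ d}

lemma Reach.mono {G G' : SimpleGraph (Fin n)} {c c' : ℕ} (h : Reach V1 γ d G G' c)
    (hcc : c ≤ c') : Reach V1 γ d G G' c' := by
  obtain ⟨t, ht, hrest⟩ := h
  exact ⟨t, ht.trans hcc, hrest⟩

lemma Reach.refl {G : SimpleGraph (Fin n)} (h : memPAM' V1 γ d G) : Reach V1 γ d G G 0 :=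
  ⟨0, le_refl _, fun _ => G, rfl, rfl, fun i _ => h, fun i hi => absurd hi (Nat.not_lt_zero i)⟩

lemma Reach.single {G H : SimpleGraph (Fin n)} (h1 : memPAM' V1 γ d G)
    (h2 : memPAM' V1 γ d H) (hf : hingeFlip G H) : Reach V1 γ d G H 1 := by
  refine ⟨1, le_refl _, fun i => if i = 0 then G else H, rfl, rfl, ?_, ?_⟩
  · intro i _
    by_cases h : i = 0 <;> simp [h, h1, h2]
  · intro i hi
    interval_cases i
    simp [hf]

lemma Reach.trans {G G' G'' : SimpleGraph (Fin n)} {a b : ℕ}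
    (h1 : Reach V1 γ d G G' a) (h2 : Reach V1 γ d G' G'' b) :
    Reach V1 γ d G G'' (a + b) := by
  obtain ⟨t1, ht1, f1, hf10, hf1t, hf1m, hf1s⟩ := h1
  obtain ⟨t2, ht2, f2, hf20, hf2t, hf2m, hf2s⟩ := h2
  refine ⟨t1 + t2, Nat.add_le_add ht1 ht2,
    fun i => if i ≤ t1 then f1 i else f2 (i - t1), ?_, ?_, ?_, ?_⟩
  · simp [hf10]
  · by_cases h : t1 + t2 ≤ t1
    · have : t2 = 0 := by omega
      subst this
      simp only [if_pos h]
      have : t1 + 0 = t1 := by omega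
      rw [this, hf1t, ← hf20, ← hf2t]
    · simp only [if_neg h]
      rw [show t1 + t2 - t1 = t2 by omega, hf2t]
  · intro i hi
    by_cases h : i ≤ t1
    · simpa [h] using hf1m i h
    · simp only [if_neg h]
      exact hf2m _ (by omega)
  · intro i hi
    have key : ∀ m, t1 ≤ m → (if m ≤ t1 then f1 m else f2 (m - t1)) = f2 (m - t1) := by
      intro m hm
      by_cases h : m ≤ t1
      · have : m = t1 := le_antisymm h hm
        subst this
        simp [hf1t, ← hf20]
      · simp [h]
    by_cases h : i + 1 ≤ t1
    · simp only [if_pos h, if_pos (by omega : i ≤ t1)]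
      exact hf1s i (by omega)
    · have hti : t1 ≤ i := by omega
      show hingeFlip (if i ≤ t1 then f1 i else f2 (i - t1))
        (if i + 1 ≤ t1 then f1 (i+1) else f2 (i + 1 - t1))
      rw [key i hti, key (i+1) (by omega)]
      rw [show i + 1 - t1 = (i - t1) + 1 by omega]
      exact hf2s _ (by omega)

lemma devSum_formula {G H : SimpleGraph (Fin n)} {u w : Fin n} (huw : u ≠ w)
    (h : ∀ v, (deg H v : ℤ) = (deg G v : ℤ) - (if v = u then 1 else 0)
      + (if v = w then 1 else 0)) :
    devSum d H = devSum d G - |(d u : ℤ) - deg G u| + |(d u : ℤ) - deg G u + 1|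
      - |(d w : ℤ) - deg G w| + |(d w : ℤ) - deg G w - 1| := by
  have hpt : ∀ v, |(d v : ℤ) - (deg H v : ℤ)| = |(d v : ℤ) - (deg G v : ℤ)|
      + (if v = u then |(d u : ℤ) - deg G u + 1| - |(d u : ℤ) - deg G u| else 0)
      + (if v = w then |(d w : ℤ) - deg G w - 1| - |(d w : ℤ) - deg G w| else 0) := by
    intro v
    rw [h v]
    by_cases hu : v = u
    · subst hu
      rw [if_pos rfl, if_neg huw, if_pos rfl, if_neg huw]
      ring_nf
    · by_cases hw : v = w
      · subst hw
        rw [if_neg hu, if_pos rfl, if_neg hu, if_pos rfl]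
        ring_nf
      · rw [if_neg hu, if_neg hw, if_neg hu, if_neg hw]
        ring_nf
  rw [devSum, devSum]
  rw [Finset.sum_congr rfl (fun v _ => hpt v), Finset.sum_add_distrib,
    Finset.sum_add_distrib]
  simp [Finset.sum_ite_eq' Finset.univ]
  ring

end ReachSec



section Darts

variable {n : ℕ}

/-- neighbor finset -/
noncomputable def nbrF (G : SimpleGraph (Fin n)) (v : Fin n) : Finset (Fin n) :=
  (G.neighborSet v).toFinset

lemma mem_nbrF {G : SimpleGraph (Fin n)} {v u : Fin n} : u ∈ nbrF G v ↔ G.Adj v u := by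
  simp [nbrF]

lemma card_nbrF (G : SimpleGraph (Fin n)) (v : Fin n) : (nbrF G v).card = deg G v := by
  rw [deg, Set.ncard_eq_toFinset_card']
  rfl

/-- darts out of a set -/
noncomputable def dartsOf (G : SimpleGraph (Fin n)) (C : Finset (Fin n)) :
    Finset ((_ : Fin n) × Fin n) :=
  C.sigma (fun x => nbrF G x)

lemma mem_dartsOf {G : SimpleGraph (Fin n)} {C : Finset (Fin n)} {p : (_ : Fin n) × Fin n} :
    p ∈ dartsOf G C ↔ p.1 ∈ C ∧ G.Adj p.1 p.2 := by
  rw [dartsOf, Finset.mem_sigma, mem_nbrF]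

lemma card_dartsOf (G : SimpleGraph (Fin n)) (C : Finset (Fin n)) :
    (dartsOf G C).card = ∑ x ∈ C, deg G x := by
  rw [dartsOf, Finset.card_sigma]
  exact Finset.sum_congr rfl (fun x _ => card_nbrF G x)

lemma card_darts_snd_le (G : SimpleGraph (Fin n)) (C W : Finset (Fin n)) :
    ((dartsOf G C).filter (fun p => p.2 ∈ W)).card ≤ ∑ q ∈ W, deg G q := by
  rw [← card_dartsOf G W]
  apply Finset.card_le_card_of_injOn (fun p => ⟨p.2, p.1⟩)
  · intro p hp
    rw [Finset.mem_coe, Finset.mem_filter, mem_dartsOf] at hp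
    rw [Finset.mem_coe, mem_dartsOf]
    exact ⟨hp.2, hp.1.2.symm⟩
  · intro p hp q hq h
    have h1 : p.2 = q.2 := congrArg Sigma.fst h
    have h2 : p.1 = q.1 := by
      have := congrArg (fun x => x.2) h
      simpa [h1] using this
    exact Sigma.ext h2 (heq_of_eq h1)

lemma card_darts_cross (G : SimpleGraph (Fin n)) (V1 C : Finset (Fin n))
    (hC : C = V1 ∨ C = V1ᶜ) :
    ((dartsOf G C).filter (fun p => p.2 ∉ C)).card = cutCount V1 G := by
  have hfin : ∀ (s : Set (Sym2 (Fin n))), s.Finite := fun s => Set.toFinite _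
  rw [cutCount_eq, Set.ncard_eq_toFinset_card']
  apply Finset.card_bij (fun p _ => s(p.1, p.2))
  · intro p hp
    rw [Finset.mem_filter, mem_dartsOf] at hp
    obtain ⟨⟨h1, hadj⟩, h2⟩ := hp
    rw [Set.mem_toFinset]
    refine ⟨hadj, ?_⟩
    rw [cutP_iff]
    rcases hC with rfl | rfl
    · exact Or.inl ⟨h1, h2⟩
    · rw [Finset.mem_compl] at h1
      have h2' : p.2 ∈ V1 := by
        by_contra hx
        exact h2 (Finset.mem_compl.mpr hx)
      exact Or.inr ⟨h2', h1⟩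
  · intro p hp q hq h
    rw [Finset.mem_filter, mem_dartsOf] at hp hq
    rw [Sym2.eq_iff] at h
    rcases h with ⟨h1, h2⟩ | ⟨h1, h2⟩
    · exact Sigma.ext h1 (heq_of_eq h2)
    · exact absurd (h1 ▸ hp.1.1) hq.2
  · intro e he
    rw [Set.mem_toFinset] at he
    obtain ⟨hmem, u, v, rfl, hu, hv⟩ := he
    have hadj : G.Adj u v := hmem
    rcases hC with rfl | rfl
    · refine ⟨⟨u, v⟩, ?_, rfl⟩
      rw [Finset.mem_filter, mem_dartsOf]
      exact ⟨⟨hu, hadj⟩, hv⟩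
    · refine ⟨⟨v, u⟩, ?_, Sym2.eq_swap⟩
      rw [Finset.mem_filter, mem_dartsOf, Finset.mem_compl, Finset.mem_compl]
      exact ⟨⟨hv, hadj.symm⟩, fun h => h hu⟩

lemma cut_parity (G : SimpleGraph (Fin n)) (V1 : Finset (Fin n)) :
    ((cutCount V1 G : ℕ) : ZMod 2) = ((∑ v ∈ V1, deg G v : ℕ) : ZMod 2) := by
  rw [← card_dartsOf G V1,
    ← Finset.card_filter_add_card_filter_not (s := dartsOf G V1)
      (fun p => p.2 ∈ V1)]
  have hcross : ((dartsOf G V1).filter (fun p => ¬ p.2 ∈ V1)).card = cutCount V1 G :=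
    card_darts_cross G V1 V1 (Or.inl rfl)
  have heven : (((dartsOf G V1).filter (fun p => p.2 ∈ V1)).card : ZMod 2) = 0 := by
    have key : ∑ _p ∈ (dartsOf G V1).filter (fun p => p.2 ∈ V1), (1 : ZMod 2) = 0 := by
      apply Finset.sum_involution
        (g := fun (p : (_ : Fin n) × Fin n) (_ : p ∈ (dartsOf G V1).filter (fun p => p.2 ∈ V1))
          => (⟨p.2, p.1⟩ : (_ : Fin n) × Fin n))
      · intro a _
        decide
      · intro p hp hne
        rw [Finset.mem_filter, mem_dartsOf] at hp
        intro h
        have h1 : p.2 = p.1 := congrArg Sigma.fst h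
        exact G.irrefl (h1 ▸ hp.1.2)
      · intro p hp
        rw [Finset.mem_filter, mem_dartsOf] at hp ⊢
        exact ⟨⟨hp.2, hp.1.2.symm⟩, hp.1.1⟩
      · intro p hp
        rfl
    rw [Finset.card_eq_sum_ones]
    push_cast
    simpa using key
  push_cast
  rw [hcross, heven]
  ring

end Darts



section SetupSec

structure Setup (n : ℕ) (α : ℝ) (V1 : Finset (Fin n)) (γ : ℕ) (d : Fin n → ℕ) : Prop where
  hα0 : 0 < α
  hα1 : α < 1 / 2
  hV1ne : V1.Nonempty
  hV2ne : V1ᶜ.Nonempty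
  hV1 : α * n ≤ (V1.card : ℝ)
  hV2 : α * n ≤ ((V1ᶜ : Finset (Fin n)).card : ℝ)
  hdlo : ∀ i, 2 ≤ d i
  hdhi : ∀ i, ((d i : ℝ)) ^ 2 ≤ α * n / 4
  hγlo : 1 ≤ γ
  hγhi : (γ : ℝ) ≤ α * n / 2
  hgraphical : ∃ H : SimpleGraph (Fin n), memPAM V1 γ d H

variable {n : ℕ} {α : ℝ} {V1 : Finset (Fin n)} {γ : ℕ} {d : Fin n → ℕ}

/-- shorthand -/
noncomputable def sq' (α : ℝ) (n : ℕ) : ℝ := Real.sqrt (α * n)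

lemma Setup.han (S : Setup n α V1 γ d) : 16 ≤ α * n := by
  obtain ⟨v, -⟩ := S.hV1ne
  have h1 := S.hdlo v
  have h2 := S.hdhi v
  have : (2 : ℝ) ≤ (d v : ℝ) := by exact_mod_cast h1
  nlinarith

lemma Setup.hs0 (S : Setup n α V1 γ d) : 0 ≤ sq' α n := Real.sqrt_nonneg _

lemma Setup.hs2 (S : Setup n α V1 γ d) : (sq' α n) ^ 2 = α * n :=
  Real.sq_sqrt (by nlinarith [S.han])

lemma Setup.hs4 (S : Setup n α V1 γ d) : 4 ≤ sq' α n := by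
  have h := S.han
  have h2 := S.hs2
  nlinarith [S.hs0]

lemma Setup.hd_le (S : Setup n α V1 γ d) (i : Fin n) : (d i : ℝ) ≤ sq' α n / 2 := by
  have h1 := S.hdhi i
  have h2 := S.hs2
  have h3 : (0 : ℝ) ≤ (d i : ℝ) := Nat.cast_nonneg _
  nlinarith [S.hs0]

lemma Setup.hγ_le (S : Setup n α V1 γ d) : (γ : ℝ) ≤ (sq' α n) ^ 2 / 2 := by
  rw [S.hs2]; exact S.hγhi

lemma Setup.hC_card (S : Setup n α V1 γ d) (C : Finset (Fin n)) (hC : C = V1 ∨ C = V1ᶜ) :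
    (sq' α n) ^ 2 ≤ (C.card : ℝ) := by
  rw [S.hs2]
  rcases hC with rfl | rfl
  · exact S.hV1
  · exact S.hV2

section WithG

variable {G : SimpleGraph (Fin n)} (hG : memPAM' V1 γ d G)

include hG

lemma sum_deg_le_sum_d (T : Finset (Fin n)) :
    ∑ v ∈ T, (deg G v : ℤ) ≤ (∑ v ∈ T, (d v : ℤ)) + 2 := by
  obtain ⟨h1, h2, -⟩ := hG
  have hzero : ∑ v, ((deg G v : ℤ) - (d v : ℤ)) = 0 := by
    rw [Finset.sum_sub_distrib]
    have : ((∑ v, deg G v : ℕ) : ℤ) = ((∑ v, d v : ℕ) : ℤ) := by exact_mod_cast h1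
    push_cast at this
    omega
  have key : ∑ v ∈ T, ((deg G v : ℤ) - d v) ≤ 2 := by
    have e1 : ∀ v, 2 * ((deg G v : ℤ) - d v) ≤ |(d v : ℤ) - deg G v| + ((deg G v : ℤ) - d v) := by
      intro v
      simp only [Int.abs_eq_natAbs]
      omega
    have e2 : ∑ v ∈ T, (|(d v : ℤ) - deg G v| + ((deg G v : ℤ) - d v)) ≤
        ∑ v, (|(d v : ℤ) - deg G v| + ((deg G v : ℤ) - d v)) := by
      apply Finset.sum_le_sum_of_subset_of_nonneg (Finset.subset_univ T)
      intro v _ _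
      simp only [Int.abs_eq_natAbs]
      omega
    have e3 : ∑ v, (|(d v : ℤ) - deg G v| + ((deg G v : ℤ) - d v)) ≤ 4 := by
      rw [Finset.sum_add_distrib, hzero]
      omega
    have e4 : 2 * ∑ v ∈ T, ((deg G v : ℤ) - d v) ≤ 4 := by
      rw [Finset.mul_sum]
      calc ∑ v ∈ T, 2 * ((deg G v : ℤ) - d v)
          ≤ ∑ v ∈ T, (|(d v : ℤ) - deg G v| + ((deg G v : ℤ) - d v)) :=
            Finset.sum_le_sum (fun v _ => e1 v)
        _ ≤ 4 := e2.trans e3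
      
    omega
  have := Finset.sum_sub_distrib (s := T) (f := fun v => (deg G v : ℤ)) (g := fun v => (d v : ℤ))
  omega

lemma sum_d_le_sum_deg (T : Finset (Fin n)) :
    ∑ v ∈ T, (d v : ℤ) ≤ (∑ v ∈ T, (deg G v : ℤ)) + 2 := by
  obtain ⟨h1, h2, -⟩ := hG
  have hzero : ∑ v, ((d v : ℤ) - (deg G v : ℤ)) = 0 := by
    rw [Finset.sum_sub_distrib]
    have : ((∑ v, deg G v : ℕ) : ℤ) = ((∑ v, d v : ℕ) : ℤ) := by exact_mod_cast h1
    push_cast at this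
    omega
  have key : ∑ v ∈ T, ((d v : ℤ) - deg G v) ≤ 2 := by
    have e1 : ∀ v, 2 * ((d v : ℤ) - deg G v) ≤ |(d v : ℤ) - deg G v| + ((d v : ℤ) - deg G v) := by
      intro v
      simp only [Int.abs_eq_natAbs]
      omega
    have e2 : ∑ v ∈ T, (|(d v : ℤ) - deg G v| + ((d v : ℤ) - deg G v)) ≤
        ∑ v, (|(d v : ℤ) - deg G v| + ((d v : ℤ) - deg G v)) := by
      apply Finset.sum_le_sum_of_subset_of_nonneg (Finset.subset_univ T)
      intro v _ _
      simp only [Int.abs_eq_natAbs]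
      omega
    have e3 : ∑ v, (|(d v : ℤ) - deg G v| + ((d v : ℤ) - deg G v)) ≤ 4 := by
      rw [Finset.sum_add_distrib, hzero]
      omega
    have e4 : 2 * ∑ v ∈ T, ((d v : ℤ) - deg G v) ≤ 4 := by
      rw [Finset.mul_sum]
      calc ∑ v ∈ T, 2 * ((d v : ℤ) - deg G v)
          ≤ ∑ v ∈ T, (|(d v : ℤ) - deg G v| + ((d v : ℤ) - deg G v)) :=
            Finset.sum_le_sum (fun v _ => e1 v)
        _ ≤ 4 := e2.trans e3
    omega
  have := Finset.sum_sub_distrib (s := T) (f := fun v => (d v : ℤ)) (g := fun v => (deg G v : ℤ))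
  omega

lemma deg_le_d (v : Fin n) : (deg G v : ℤ) ≤ (d v : ℤ) + 2 := by
  have := sum_deg_le_sum_d hG {v}
  simpa using this

end WithG

end SetupSec



section Counting

variable {n : ℕ} {α : ℝ} {V1 : Finset (Fin n)} {γ : ℕ} {d : Fin n → ℕ}
variable {G : SimpleGraph (Fin n)}

lemma cut_le (hG : memPAM' V1 γ d G) : (cutCount V1 G : ℤ) ≤ (γ : ℤ) + 1 := by
  have := hG.2.2
  simp only [Int.abs_eq_natAbs] at this
  omega

/-- the closed neighborhood -/
noncomputable def nbhd (G : SimpleGraph (Fin n)) (z : Fin n) : Finset (Fin n) :=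
  insert z (nbrF G z)

lemma not_mem_nbhd {z x : Fin n} (h : x ∉ nbhd G z) : ¬ G.Adj z x ∧ x ≠ z := by
  rw [nbhd, Finset.mem_insert, mem_nbrF] at h
  push_neg at h
  exact ⟨h.2, h.1⟩

lemma sum_deg_nbhd (S : Setup n α V1 γ d) (hG : memPAM' V1 γ d G) (z : Fin n) :
    ((∑ y ∈ nbhd G z, (deg G y : ℤ)) : ℝ) ≤
      (sq' α n) ^ 2 / 4 + 3 * (sq' α n) / 2 + 2 := by
  set s := sq' α n with hs
  have hs0 : 0 ≤ s := S.hs0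
  have hs4 : 4 ≤ s := S.hs4
  have h1 : ∑ y ∈ nbhd G z, (deg G y : ℤ) ≤ (∑ y ∈ nbhd G z, (d y : ℤ)) + 2 :=
    sum_deg_le_sum_d hG _
  have h2 : ((∑ y ∈ nbhd G z, (d y : ℤ)) : ℝ) ≤ ((nbhd G z).card : ℝ) * (s / 2) := by
    push_cast
    calc ∑ y ∈ nbhd G z, (d y : ℝ) ≤ ∑ _y ∈ nbhd G z, (s / 2) :=
          Finset.sum_le_sum (fun y _ => S.hd_le y)
      _ = ((nbhd G z).card : ℝ) * (s / 2) := by rw [Finset.sum_const]; ring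
  have h3 : ((nbhd G z).card : ℝ) ≤ s / 2 + 3 := by
    have hc : (nbhd G z).card ≤ deg G z + 1 := by
      rw [nbhd]
      calc (insert z (nbrF G z)).card ≤ (nbrF G z).card + 1 := Finset.card_insert_le _ _
        _ = deg G z + 1 := by rw [card_nbrF]
    have hdz : (deg G z : ℤ) ≤ (d z : ℤ) + 2 := deg_le_d hG z
    have hdz' : ((d z : ℕ) : ℝ) ≤ s / 2 := S.hd_le z
    have : ((deg G z : ℕ) : ℝ) ≤ s / 2 + 2 := by
      have : ((deg G z : ℕ) : ℝ) ≤ ((d z : ℕ) : ℝ) + 2 := by exact_mod_cast hdz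
      linarith
    calc ((nbhd G z).card : ℝ) ≤ ((deg G z : ℕ) : ℝ) + 1 := by exact_mod_cast hc
      _ ≤ s / 2 + 3 := by linarith
  have h1' : ((∑ y ∈ nbhd G z, (deg G y : ℤ)) : ℝ) ≤ ((∑ y ∈ nbhd G z, (d y : ℤ)) : ℝ) + 2 := by
    exact_mod_cast h1
  have hmul : ((nbhd G z).card : ℝ) * (s / 2) ≤ (s / 2 + 3) * (s / 2) := by
    apply mul_le_mul_of_nonneg_right h3
    linarith
  calc ((∑ y ∈ nbhd G z, (deg G y : ℤ)) : ℝ)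
      ≤ ((nbhd G z).card : ℝ) * (s / 2) + 2 := by linarith
    _ ≤ (s / 2 + 3) * (s / 2) + 2 := by linarith
    _ = s ^ 2 / 4 + 3 * s / 2 + 2 := by ring

lemma sum_deg_lower (S : Setup n α V1 γ d) (hG : memPAM' V1 γ d G)
    (C : Finset (Fin n)) (hC : C = V1 ∨ C = V1ᶜ) :
    2 * (sq' α n) ^ 2 - 2 ≤ ((∑ y ∈ C, (deg G y : ℤ)) : ℝ) := by
  set s := sq' α n with hs
  have h1 : ∑ y ∈ C, (d y : ℤ) ≤ (∑ y ∈ C, (deg G y : ℤ)) + 2 := sum_d_le_sum_deg hG C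
  have h2 : 2 * (C.card : ℝ) ≤ ((∑ y ∈ C, (d y : ℤ)) : ℝ) := by
    push_cast
    calc 2 * (C.card : ℝ) = ∑ _y ∈ C, (2 : ℝ) := by rw [Finset.sum_const]; ring
      _ ≤ ∑ y ∈ C, (d y : ℝ) := Finset.sum_le_sum (fun y _ => by exact_mod_cast S.hdlo y)
  have h3 : s ^ 2 ≤ (C.card : ℝ) := S.hC_card C hC
  have h1' : ((∑ y ∈ C, (d y : ℤ)) : ℝ) ≤ ((∑ y ∈ C, (deg G y : ℤ)) : ℝ) + 2 := by
    exact_mod_cast h1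
  linarith

/-- B1 : existence of a good dart for the same-class gadget -/
lemma exists_good_pair (S : Setup n α V1 γ d) (hG : memPAM' V1 γ d G)
    (C : Finset (Fin n)) (hC : C = V1 ∨ C = V1ᶜ) (z w : Fin n) :
    ∃ x q : Fin n, G.Adj x q ∧ x ∈ C ∧ ¬ G.Adj z x ∧ x ≠ z ∧ ¬ G.Adj w q ∧ q ≠ w := by
  classical
  set s := sq' α n with hs
  set F := (dartsOf G C).filter (fun p => p.1 ∉ nbhd G z ∧ p.2 ∉ nbhd G w) with hF
  have hsub : dartsOf G C ⊆ F ∪ ((dartsOf G C).filter (fun p => p.1 ∈ nbhd G z) ∪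
      (dartsOf G C).filter (fun p => p.2 ∈ nbhd G w)) := by
    intro p hp
    rw [Finset.mem_union, Finset.mem_union, Finset.mem_filter, Finset.mem_filter,
      Finset.mem_filter]
    by_cases h1 : p.1 ∈ nbhd G z
    · exact Or.inr (Or.inl ⟨hp, h1⟩)
    · by_cases h2 : p.2 ∈ nbhd G w
      · exact Or.inr (Or.inr ⟨hp, h2⟩)
      · exact Or.inl ⟨hp, h1, h2⟩
  have hb1 : ((dartsOf G C).filter (fun p => p.1 ∈ nbhd G z)).card ≤
      ∑ y ∈ nbhd G z, deg G y := by
    rw [← card_dartsOf G (nbhd G z)]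
    apply Finset.card_le_card
    intro p hp
    rw [Finset.mem_filter, mem_dartsOf] at hp
    rw [mem_dartsOf]
    exact ⟨hp.2, hp.1.2⟩
  have hb2 : ((dartsOf G C).filter (fun p => p.2 ∈ nbhd G w)).card ≤
      ∑ y ∈ nbhd G w, deg G y := card_darts_snd_le G C (nbhd G w)
  -- cards in ℝ
  have hcard : (dartsOf G C).card ≤ F.card +
      (((dartsOf G C).filter (fun p => p.1 ∈ nbhd G z)).card +
       ((dartsOf G C).filter (fun p => p.2 ∈ nbhd G w)).card) := by
    calc (dartsOf G C).card ≤ (F ∪ _).card := Finset.card_le_card hsub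
      _ ≤ F.card + ((dartsOf G C).filter (fun p => p.1 ∈ nbhd G z) ∪
          (dartsOf G C).filter (fun p => p.2 ∈ nbhd G w)).card := Finset.card_union_le _ _
      _ ≤ _ := by
          have := Finset.card_union_le ((dartsOf G C).filter (fun p => p.1 ∈ nbhd G z))
            ((dartsOf G C).filter (fun p => p.2 ∈ nbhd G w))
          omega
  have hdl : 2 * s ^ 2 - 2 ≤ ((dartsOf G C).card : ℝ) := by
    rw [card_dartsOf]
    have := sum_deg_lower S hG C hC
    calc (2 : ℝ) * s ^ 2 - 2 ≤ ((∑ y ∈ C, (deg G y : ℤ)) : ℝ) := this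
      _ = ((∑ y ∈ C, deg G y : ℕ) : ℝ) := by push_cast; rfl
  have hn1 : ((∑ y ∈ nbhd G z, deg G y : ℕ) : ℝ) ≤ s ^ 2 / 4 + 3 * s / 2 + 2 := by
    have := sum_deg_nbhd S hG z
    calc ((∑ y ∈ nbhd G z, deg G y : ℕ) : ℝ)
        = ((∑ y ∈ nbhd G z, (deg G y : ℤ)) : ℝ) := by push_cast; rfl
      _ ≤ _ := this
  have hn2 : ((∑ y ∈ nbhd G w, deg G y : ℕ) : ℝ) ≤ s ^ 2 / 4 + 3 * s / 2 + 2 := by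
    have := sum_deg_nbhd S hG w
    calc ((∑ y ∈ nbhd G w, deg G y : ℕ) : ℝ)
        = ((∑ y ∈ nbhd G w, (deg G y : ℤ)) : ℝ) := by push_cast; rfl
      _ ≤ _ := this
  have hFpos : 0 < F.card := by
    by_contra h
    push_neg at h
    interval_cases hFc : F.card
    have hcard' : ((dartsOf G C).card : ℝ) ≤
        ((∑ y ∈ nbhd G z, deg G y : ℕ) : ℝ) + ((∑ y ∈ nbhd G w, deg G y : ℕ) : ℝ) := by
      have : (dartsOf G C).card ≤ (∑ y ∈ nbhd G z, deg G y) + (∑ y ∈ nbhd G w, deg G y) := by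
        omega
      exact_mod_cast this
    have hs4 : (4 : ℝ) ≤ s := S.hs4
    nlinarith
  obtain ⟨p, hp⟩ := Finset.card_pos.mp hFpos
  rw [hF, Finset.mem_filter, mem_dartsOf] at hp
  obtain ⟨⟨hpC, hpadj⟩, hp1, hp2⟩ := hp
  obtain ⟨hz1, hz2⟩ := not_mem_nbhd hp1
  obtain ⟨hw1, hw2⟩ := not_mem_nbhd hp2
  exact ⟨p.1, p.2, hpadj, hpC, hz1, hz2, hw1, hw2⟩

/-- B2 : existence of an internal dart avoiding a neighborhood -/
lemma exists_internal_pair (S : Setup n α V1 γ d) (hG : memPAM' V1 γ d G)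
    (A : Finset (Fin n)) (hA : A = V1 ∨ A = V1ᶜ) (w : Fin n) :
    ∃ x p : Fin n, G.Adj x p ∧ x ∈ A ∧ p ∈ A ∧ ¬ G.Adj w p ∧ p ≠ w := by
  classical
  set s := sq' α n with hs
  set F := (dartsOf G A).filter (fun p => p.2 ∈ A ∧ p.2 ∉ nbhd G w) with hF
  have hsub : dartsOf G A ⊆ F ∪ ((dartsOf G A).filter (fun p => p.2 ∉ A) ∪
      (dartsOf G A).filter (fun p => p.2 ∈ nbhd G w)) := by
    intro p hp
    rw [Finset.mem_union, Finset.mem_union, Finset.mem_filter, Finset.mem_filter,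
      Finset.mem_filter]
    by_cases h1 : p.2 ∈ A
    · by_cases h2 : p.2 ∈ nbhd G w
      · exact Or.inr (Or.inr ⟨hp, h2⟩)
      · exact Or.inl ⟨hp, h1, h2⟩
    · exact Or.inr (Or.inl ⟨hp, h1⟩)
  have hb1 : ((dartsOf G A).filter (fun p => p.2 ∉ A)).card = cutCount V1 G :=
    card_darts_cross G V1 A hA
  have hb2 : ((dartsOf G A).filter (fun p => p.2 ∈ nbhd G w)).card ≤
      ∑ y ∈ nbhd G w, deg G y := card_darts_snd_le G A (nbhd G w)
  have hcard : (dartsOf G A).card ≤ F.card +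
      (((dartsOf G A).filter (fun p => p.2 ∉ A)).card +
       ((dartsOf G A).filter (fun p => p.2 ∈ nbhd G w)).card) := by
    calc (dartsOf G A).card ≤ (F ∪ _).card := Finset.card_le_card hsub
      _ ≤ F.card + ((dartsOf G A).filter (fun p => p.2 ∉ A) ∪
          (dartsOf G A).filter (fun p => p.2 ∈ nbhd G w)).card := Finset.card_union_le _ _
      _ ≤ _ := by
          have := Finset.card_union_le ((dartsOf G A).filter (fun p => p.2 ∉ A))
            ((dartsOf G A).filter (fun p => p.2 ∈ nbhd G w))
          omega
  have hdl : 2 * s ^ 2 - 2 ≤ ((dartsOf G A).card : ℝ) := by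
    rw [card_dartsOf]
    have := sum_deg_lower S hG A hA
    calc (2 : ℝ) * s ^ 2 - 2 ≤ ((∑ y ∈ A, (deg G y : ℤ)) : ℝ) := this
      _ = ((∑ y ∈ A, deg G y : ℕ) : ℝ) := by push_cast; rfl
  have hn2 : ((∑ y ∈ nbhd G w, deg G y : ℕ) : ℝ) ≤ s ^ 2 / 4 + 3 * s / 2 + 2 := by
    have := sum_deg_nbhd S hG w
    calc ((∑ y ∈ nbhd G w, deg G y : ℕ) : ℝ)
        = ((∑ y ∈ nbhd G w, (deg G y : ℤ)) : ℝ) := by push_cast; rfl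
      _ ≤ _ := this
  have hcut : ((cutCount V1 G : ℕ) : ℝ) ≤ s ^ 2 / 2 + 1 := by
    have h1 : (cutCount V1 G : ℤ) ≤ (γ : ℤ) + 1 := cut_le hG
    have h2 : (γ : ℝ) ≤ s ^ 2 / 2 := S.hγ_le
    have h1' : ((cutCount V1 G : ℕ) : ℝ) ≤ (γ : ℝ) + 1 := by exact_mod_cast h1
    linarith
  have hFpos : 0 < F.card := by
    by_contra h
    push_neg at h
    interval_cases hFc : F.card
    have hcard' : ((dartsOf G A).card : ℝ) ≤
        ((cutCount V1 G : ℕ) : ℝ) + ((∑ y ∈ nbhd G w, deg G y : ℕ) : ℝ) := by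
      have : (dartsOf G A).card ≤ cutCount V1 G + (∑ y ∈ nbhd G w, deg G y) := by
        omega
      exact_mod_cast this
    have hs4 : (4 : ℝ) ≤ s := S.hs4
    nlinarith
  obtain ⟨p, hp⟩ := Finset.card_pos.mp hFpos
  rw [hF, Finset.mem_filter, mem_dartsOf] at hp
  obtain ⟨⟨hpA, hpadj⟩, hp1, hp2⟩ := hp
  obtain ⟨hw1, hw2⟩ := not_mem_nbhd hp2
  exact ⟨p.1, p.2, hpadj, hpA, hp1, hw1, hw2⟩

/-- B0 : a fresh vertex in a prescribed class -/
lemma exists_fresh (S : Setup n α V1 γ d) (hG : memPAM' V1 γ d G)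
    (C : Finset (Fin n)) (hC : C = V1 ∨ C = V1ᶜ) (z w : Fin n) :
    ∃ k, k ∈ C ∧ ¬ G.Adj z k ∧ k ≠ z ∧ k ≠ w := by
  classical
  set s := sq' α n with hs
  set X := insert w (nbhd G z) with hX
  have hXcard : ((X.card : ℕ) : ℝ) ≤ s / 2 + 4 := by
    have h1 : X.card ≤ (nbhd G z).card + 1 := Finset.card_insert_le _ _
    have h2 : (nbhd G z).card ≤ deg G z + 1 := by
      rw [nbhd]
      calc (insert z (nbrF G z)).card ≤ (nbrF G z).card + 1 := Finset.card_insert_le _ _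
        _ = deg G z + 1 := by rw [card_nbrF]
    have h3 : (deg G z : ℤ) ≤ (d z : ℤ) + 2 := deg_le_d hG z
    have h4 : ((d z : ℕ) : ℝ) ≤ s / 2 := S.hd_le z
    have h5 : ((deg G z : ℕ) : ℝ) ≤ s / 2 + 2 := by
      have : ((deg G z : ℕ) : ℝ) ≤ ((d z : ℕ) : ℝ) + 2 := by exact_mod_cast h3
      linarith
    have h6 : ((X.card : ℕ) : ℝ) ≤ ((deg G z : ℕ) : ℝ) + 2 := by
      have : X.card ≤ deg G z + 2 := by omega
      exact_mod_cast this
    linarith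
  have hpos : 0 < (C \ X).card := by
    by_contra h
    push_neg at h
    interval_cases hc : (C \ X).card
    have hsub : C.card ≤ X.card := by
      have h1 : C.card ≤ (C \ X).card + X.card := by
        have := Finset.card_le_card_sdiff_add_card (s := C) (t := X)
        omega
      omega
    have hsub' : ((C.card : ℕ) : ℝ) ≤ ((X.card : ℕ) : ℝ) := by exact_mod_cast hsub
    have hs4 : (4 : ℝ) ≤ s := S.hs4
    have hCcard := S.hC_card C hC
    nlinarith
  obtain ⟨k, hk⟩ := Finset.card_pos.mp hpos
  rw [Finset.mem_sdiff, hX, Finset.mem_insert] at hk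
  push_neg at hk
  obtain ⟨hkC, hkw, hknz⟩ := hk
  obtain ⟨h1, h2⟩ := not_mem_nbhd hknz
  exact ⟨k, hkC, h1, h2, hkw⟩

lemma exists_nbr_ne (hdeg : 2 ≤ deg G u) (w : Fin n) :
    ∃ p, G.Adj u p ∧ p ≠ w := by
  have h1 : 1 < (nbrF G u).card := by rw [card_nbrF]; omega
  obtain ⟨p, hp, hpw⟩ := Finset.exists_mem_ne h1 w
  exact ⟨p, mem_nbrF.mp hp, hpw⟩

end Counting



section Gadget

variable {n : ℕ} {α : ℝ} {V1 : Finset (Fin n)} {γ : ℕ} {d : Fin n → ℕ}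
variable {G : SimpleGraph (Fin n)}

/-- the class of a vertex -/
def cls (V1 : Finset (Fin n)) (v : Fin n) : Finset (Fin n) :=
  if v ∈ V1 then V1 else V1ᶜ

lemma cls_or (V1 : Finset (Fin n)) (v : Fin n) : cls V1 v = V1 ∨ cls V1 v = V1ᶜ := by
  rw [cls]; split_ifs <;> simp

lemma mem_cls_iff (V1 : Finset (Fin n)) (v x : Fin n) :
    x ∈ cls V1 v ↔ (x ∈ V1 ↔ v ∈ V1) := by
  rw [cls]
  split_ifs with h <;> simp [h] <;> tauto

lemma mem_cls_self (V1 : Finset (Fin n)) (v : Fin n) : v ∈ cls V1 v := by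
  rw [mem_cls_iff]

lemma not_cutP_same {a b : Fin n} (h : a ∈ V1 ↔ b ∈ V1) : ¬ cutP V1 s(a, b) := by
  rw [cutP_iff]
  tauto

lemma cutP_cross {a b : Fin n} (h : ¬ (a ∈ V1 ↔ b ∈ V1)) : cutP V1 s(a, b) := by
  rw [cutP_iff]
  tauto

lemma devSum_le_move {H : SimpleGraph (Fin n)} {u w : Fin n} (huw : u ≠ w)
    (hw : deg G w < d w)
    (hf : ∀ v, (deg H v : ℤ) = (deg G v : ℤ) - (if v = u then 1 else 0)
      + (if v = w then 1 else 0)) :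
    devSum d H ≤ devSum d G := by
  rw [devSum_formula huw hf]
  have hw' : (deg G w : ℤ) < (d w : ℤ) := by exact_mod_cast hw
  simp only [Int.abs_eq_natAbs]
  omega

lemma devSum_eq_move {H : SimpleGraph (Fin n)} {u w : Fin n} (huw : u ≠ w)
    (hu : d u < deg G u) (hw : deg G w < d w)
    (hf : ∀ v, (deg H v : ℤ) = (deg G v : ℤ) - (if v = u then 1 else 0)
      + (if v = w then 1 else 0)) :
    devSum d H = devSum d G - 2 := by
  rw [devSum_formula huw hf]
  have hw' : (deg G w : ℤ) < (d w : ℤ) := by exact_mod_cast hw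
  have hu' : (d u : ℤ) < (deg G u : ℤ) := by exact_mod_cast hu
  simp only [Int.abs_eq_natAbs]
  omega

lemma memPAM'_devSum (hG : memPAM' V1 γ d G) : devSum d G ≤ 4 := hG.2.1

lemma memPAM'_of (h1 : ∑ v, deg G v = ∑ v, d v) (h2 : devSum d G ≤ 4)
    (h3 : |(cutCount V1 G : ℤ) - (γ : ℤ)| ≤ 1) : memPAM' V1 γ d G := ⟨h1, h2, h3⟩

section FlipStep

variable {i j k : Fin n}
variable (hij : G.Adj i j) (hjk : j ≠ k) (hnjk : ¬ G.Adj j k)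

include hij hjk hnjk

lemma flip_cut_eq (V1 : Finset (Fin n)) (hiff : cutP V1 s(i, j) ↔ cutP V1 s(j, k)) :
    cutCount V1 (flipG G i j k) = cutCount V1 G := by
  have h := flip_cut hij hjk hnjk V1
  by_cases hc : cutP V1 s(i, j)
  · rw [if_pos hc, if_pos (hiff.mp hc)] at h
    omega
  · rw [if_neg hc, if_neg (fun h2 => hc (hiff.mpr h2))] at h
    omega

lemma flip_sum_eq (hG : memPAM' V1 γ d G) :
    ∑ v, deg (flipG G i j k) v = ∑ v, d v := by
  rw [flip_sum_deg hij hjk hnjk]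
  exact hG.1

end FlipStep

/-- The same-class transfer gadget: 2 hinge flips moving one unit of degree from
`u` to `w` (same class), leaving the cut count unchanged. -/
lemma gadgetS (S : Setup n α V1 γ d) (hG : memPAM' V1 γ d G) (u w p₀ : Fin n)
    (hclass : u ∈ V1 ↔ w ∈ V1) (huw : u ≠ w) (hw : deg G w < d w)
    (hup : G.Adj u p₀) (hpw : p₀ ≠ w) :
    ∃ G' : SimpleGraph (Fin n), Reach V1 γ d G G' 2 ∧ memPAM' V1 γ d G' ∧
      (∀ v, (deg G' v : ℤ) = (deg G v : ℤ) - (if v = u then 1 else 0)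
        + (if v = w then 1 else 0)) ∧
      cutCount V1 G' = cutCount V1 G := by
  classical
  -- find a good dart (x, q)
  obtain ⟨x, q, hxq, hxC, hpx, hxp, hwq, hqw⟩ :=
    exists_good_pair S hG (cls V1 w) (cls_or V1 w) p₀ w
  have hxw_cls : x ∈ V1 ↔ w ∈ V1 := (mem_cls_iff V1 w x).mp hxC
  have hxu_cls : x ∈ V1 ↔ u ∈ V1 := hxw_cls.trans hclass.symm
  have hxu : x ≠ u := by
    rintro rfl
    exact hpx hup.symm
  have hxw : x ≠ w := by
    rintro rfl
    exact hwq hxq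
  have hqx : x ≠ q := hxq.ne
  -- flip 1 : delete {x,q}, add {q,w}
  have hf1c : ¬ G.Adj q w := fun h => hwq h.symm
  set G1 := flipG G x q w with hG1
  have hdeg1 : ∀ v, (deg G1 v : ℤ) = (deg G v : ℤ) - (if v = x then 1 else 0)
      + (if v = w then 1 else 0) := flip_deg hxq hqw hf1c
  have hcut1 : cutCount V1 G1 = cutCount V1 G := by
    apply flip_cut_eq hxq hqw hf1c
    rw [cutP_iff, cutP_iff]
    tauto
  have hmem1 : memPAM' V1 γ d G1 := by
    refine memPAM'_of (flip_sum_eq hxq hqw hf1c hG) ?_ ?_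
    · exact le_trans (devSum_le_move hxw hw hdeg1) (memPAM'_devSum hG)
    · rw [hcut1]
      exact hG.2.2
  -- flip 2 : delete {u,p₀}, add {p₀,x}
  have hadj2 : G1.Adj u p₀ := by
    rw [hG1, flip_adj]
    refine Or.inl ⟨hup, ?_⟩
    intro hcon
    rw [Sym2.eq_iff] at hcon
    rcases hcon with ⟨rfl, rfl⟩ | ⟨rfl, rfl⟩
    · exact hxu rfl
    · exact hxp rfl
  have hpx2 : p₀ ≠ x := fun h => hxp h.symm
  have hnadj2 : ¬ G1.Adj p₀ x := by
    rw [hG1, flip_adj]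
    rintro (⟨h, -⟩ | ⟨h, -⟩)
    · exact hpx h
    · rw [Sym2.eq_iff] at h
      rcases h with ⟨-, h2⟩ | ⟨h1, -⟩
      · exact hxw h2
      · exact hpw h1
  set G2 := flipG G1 u p₀ x with hG2
  have hdeg2' : ∀ v, (deg G2 v : ℤ) = (deg G1 v : ℤ) - (if v = u then 1 else 0)
      + (if v = x then 1 else 0) := flip_deg hadj2 hpx2 hnadj2
  have hdeg2 : ∀ v, (deg G2 v : ℤ) = (deg G v : ℤ) - (if v = u then 1 else 0)
      + (if v = w then 1 else 0) := by
    intro v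
    rw [hdeg2' v, hdeg1 v]
    split_ifs <;> omega
  have hcut2 : cutCount V1 G2 = cutCount V1 G := by
    rw [show cutCount V1 G2 = cutCount V1 G1 from ?_, hcut1]
    apply flip_cut_eq hadj2 hpx2 hnadj2
    rw [cutP_iff, cutP_iff]
    tauto
  have hmem2 : memPAM' V1 γ d G2 := by
    refine memPAM'_of (flip_sum_eq hadj2 hpx2 hnadj2 hmem1) ?_ ?_
    · exact le_trans (devSum_le_move huw hw hdeg2) (memPAM'_devSum hG)
    · rw [hcut2]
      exact hG.2.2
  refine ⟨G2, ?_, hmem2, hdeg2, hcut2⟩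
  have r1 : Reach V1 γ d G G1 1 := Reach.single hG hmem1 (flip_hinge hxq hqw hf1c)
  have r2 : Reach V1 γ d G1 G2 1 := Reach.single hmem1 hmem2 (flip_hinge hadj2 hpx2 hnadj2)
  exact r1.trans r2

end Gadget



section Unit

variable {n : ℕ} {α : ℝ} {V1 : Finset (Fin n)} {γ : ℕ} {d : Fin n → ℕ}
variable {G : SimpleGraph (Fin n)}

lemma devSum_le_move' {H : SimpleGraph (Fin n)} {u w : Fin n} (huw : u ≠ w)
    (hu : d u < deg G u)
    (hf : ∀ v, (deg H v : ℤ) = (deg G v : ℤ) - (if v = u then 1 else 0)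
      + (if v = w then 1 else 0)) :
    devSum d H ≤ devSum d G := by
  rw [devSum_formula huw hf]
  have hu' : (d u : ℤ) < (deg G u : ℤ) := by exact_mod_cast hu
  simp only [Int.abs_eq_natAbs]
  omega

lemma exists_surplus_deficit (hG : memPAM' V1 γ d G) (hm : ¬ ∀ v, deg G v = d v) :
    (∃ u, d u < deg G u) ∧ (∃ w, deg G w < d w) := by
  have h1 : ∑ v, ((d v : ℤ) - (deg G v : ℤ)) = 0 := by
    rw [Finset.sum_sub_distrib]
    have : ((∑ v, deg G v : ℕ) : ℤ) = ((∑ v, d v : ℕ) : ℤ) := by exact_mod_cast hG.1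
    push_cast at this
    omega
  constructor
  · by_contra h
    push_neg at h
    have hnn : ∀ v ∈ Finset.univ, (0 : ℤ) ≤ (d v : ℤ) - (deg G v : ℤ) := by
      intro v _
      have := h v
      have : (deg G v : ℤ) ≤ (d v : ℤ) := by exact_mod_cast this
      omega
    have := (Finset.sum_eq_zero_iff_of_nonneg hnn).mp h1
    apply hm
    intro v
    have := this v (Finset.mem_univ v)
    omega
  · by_contra h
    push_neg at h
    have h1' : ∑ v, ((deg G v : ℤ) - (d v : ℤ)) = 0 := by
      rw [Finset.sum_sub_distrib] at h1 ⊢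
      omega
    have hnn : ∀ v ∈ Finset.univ, (0 : ℤ) ≤ (deg G v : ℤ) - (d v : ℤ) := by
      intro v _
      have := h v
      have : (d v : ℤ) ≤ (deg G v : ℤ) := by exact_mod_cast this
      omega
    have := (Finset.sum_eq_zero_iff_of_nonneg hnn).mp h1'
    apply hm
    intro v
    have := this v (Finset.mem_univ v)
    omega

lemma band_cases (hG : memPAM' V1 γ d G) :
    (cutCount V1 G : ℤ) = (γ : ℤ) - 1 ∨ (cutCount V1 G : ℤ) = (γ : ℤ) ∨
      (cutCount V1 G : ℤ) = (γ : ℤ) + 1 := by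
  have := hG.2.2
  simp only [Int.abs_eq_natAbs] at this
  omega

lemma exists_cut_edge (h : cutCount V1 G ≠ 0) :
    ∃ a b : Fin n, G.Adj a b ∧ a ∈ V1 ∧ b ∉ V1 := by
  have : {e ∈ G.edgeSet | cutP V1 e}.Nonempty := by
    rw [Set.nonempty_iff_ne_empty]
    intro hemp
    rw [cutCount_eq, hemp] at h
    simp at h
  obtain ⟨e, he, hc⟩ := this
  obtain ⟨a, b, rfl, ha, hb⟩ := hc
  exact ⟨a, b, he, ha, hb⟩

/-- One unit of degree-deviation repair in at most 4 flips. -/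
lemma unit (S : Setup n α V1 γ d) (hG : memPAM' V1 γ d G) (hm : ¬ ∀ v, deg G v = d v) :
    ∃ G' : SimpleGraph (Fin n), Reach V1 γ d G G' 4 ∧ memPAM' V1 γ d G' ∧
      devSum d G' ≤ devSum d G - 2 := by
  classical
  obtain ⟨⟨u, hu⟩, ⟨w, hw⟩⟩ := exists_surplus_deficit hG hm
  have huw : u ≠ w := by
    rintro rfl
    omega
  have hdegu2 : 2 ≤ deg G u := by
    have := S.hdlo u
    omega
  by_cases hsame : ∃ u' w', d u' < deg G u' ∧ deg G w' < d w' ∧ (u' ∈ V1 ↔ w' ∈ V1)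
  · -- same-class pair : direct gadget, 2 flips
    obtain ⟨u', w', hu', hw', hcls'⟩ := hsame
    have huw' : u' ≠ w' := by
      rintro rfl
      omega
    have hdegu2' : 2 ≤ deg G u' := by
      have := S.hdlo u'
      omega
    obtain ⟨p₀, hup, hpw⟩ := exists_nbr_ne hdegu2' w'
    obtain ⟨G', hr, hmem, hdeg, -⟩ := gadgetS S hG u' w' p₀ hcls' huw' hw' hup hpw
    refine ⟨G', hr.mono (by omega), hmem, ?_⟩
    have := devSum_eq_move huw' hu' hw' hdeg
    omega
  · -- all surplus/deficit pairs are cross pairs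
    have hcross : ¬ (u ∈ V1 ↔ w ∈ V1) := by
      intro h
      exact hsame ⟨u, w, hu, hw, h⟩
    rcases band_cases hG with hc | hc | hc
    · -- cut = γ - 1 : raise the cut by one while filling w
      obtain ⟨x, p, hxp, hxC, hpC, hwp, hpw⟩ :=
        exists_internal_pair S hG (cls V1 u) (cls_or V1 u) w
      have hx_cls : x ∈ V1 ↔ u ∈ V1 := (mem_cls_iff V1 u x).mp hxC
      have hp_cls : p ∈ V1 ↔ u ∈ V1 := (mem_cls_iff V1 u p).mp hpC
      have hxw : x ≠ w := by
        rintro rfl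
        exact hcross hx_cls.symm
      have hnpw : ¬ G.Adj p w := fun h => hwp h.symm
      set G1 := flipG G x p w with hG1
      have hdeg1 : ∀ v, (deg G1 v : ℤ) = (deg G v : ℤ) - (if v = x then 1 else 0)
          + (if v = w then 1 else 0) := flip_deg hxp hpw hnpw
      have hcut1 : (cutCount V1 G1 : ℤ) = (γ : ℤ) := by
        have h := flip_cut hxp hpw hnpw V1
        rw [← hG1] at h
        rw [if_neg (not_cutP_same (hx_cls.trans hp_cls.symm)),
          if_pos (cutP_cross (fun h2 => hcross (hp_cls.symm.trans h2)))] at h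
        omega
      have hmem1 : memPAM' V1 γ d G1 := by
        refine memPAM'_of (flip_sum_eq hxp hpw hnpw hG) ?_ ?_
        · exact le_trans (devSum_le_move hxw hw hdeg1) (memPAM'_devSum hG)
        · rw [hcut1]
          simp
      have r1 : Reach V1 γ d G G1 1 := Reach.single hG hmem1 (flip_hinge hxp hpw hnpw)
      by_cases hXs : d x < deg G x
      · refine ⟨G1, r1.mono (by omega), hmem1, ?_⟩
        have := devSum_eq_move hxw hXs hw hdeg1
        omega
      · push_neg at hXs
        have hxu : x ≠ u := by
          rintro rfl
          omega
        have hdG1x : deg G1 x < d x := by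
          have h := hdeg1 x
          rw [if_pos rfl, if_neg hxw] at h
          have h1 : (deg G1 x : ℤ) = (deg G x : ℤ) - 1 := by omega
          have h2 : (deg G x : ℤ) ≤ (d x : ℤ) := by exact_mod_cast hXs
          omega
        have hdG1u : deg G1 u = deg G u := by
          have h := hdeg1 u
          rw [if_neg (fun h2 : u = x => hxu h2.symm), if_neg huw] at h
          omega
        have hu1 : d u < deg G1 u := by omega
        have hdegu2' : 2 ≤ deg G1 u := by omega
        obtain ⟨p₀, hup', hpx'⟩ := exists_nbr_ne hdegu2' x
        obtain ⟨G2, r2, hmem2, hdeg2, -⟩ :=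
          gadgetS S hmem1 u x p₀ (hx_cls.symm) (fun h => hxu h.symm) hdG1x hup' hpx'
        refine ⟨G2, (r1.trans r2).mono (by omega), hmem2, ?_⟩
        have hnet : ∀ v, (deg G2 v : ℤ) = (deg G v : ℤ) - (if v = u then 1 else 0)
            + (if v = w then 1 else 0) := by
          intro v
          rw [hdeg2 v, hdeg1 v]
          split_ifs <;> omega
        have := devSum_eq_move huw hu hw hnet
        omega
    · -- cut = γ : relocate surplus into w's class, then same-class transfer
      obtain ⟨p, hup, hpw⟩ := exists_nbr_ne hdegu2 w
      obtain ⟨k, hkC, hpk, hkp, hkw⟩ := exists_fresh S hG (cls V1 w) (cls_or V1 w) p w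
      have hk_cls : k ∈ V1 ↔ w ∈ V1 := (mem_cls_iff V1 w k).mp hkC
      have hku : k ≠ u := by
        rintro rfl
        exact hpk hup.symm
      set G1 := flipG G u p k with hG1
      have hpk' : p ≠ k := fun h => hkp h.symm
      have hdeg1 : ∀ v, (deg G1 v : ℤ) = (deg G v : ℤ) - (if v = u then 1 else 0)
          + (if v = k then 1 else 0) := flip_deg hup hpk' hpk
      have hcut1 : |(cutCount V1 G1 : ℤ) - (γ : ℤ)| ≤ 1 := by
        have h := flip_cut hup hpk' hpk V1
        rw [← hG1] at h
        have h2 := hc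
        simp only [Int.abs_eq_natAbs]
        split_ifs at h <;> omega
      have hmem1 : memPAM' V1 γ d G1 := by
        refine memPAM'_of (flip_sum_eq hup hpk' hpk hG) ?_ ?_
        · exact le_trans (devSum_le_move' hku.symm hu hdeg1) (memPAM'_devSum hG)
        · exact hcut1
      have r1 : Reach V1 γ d G G1 1 := Reach.single hG hmem1 (flip_hinge hup hpk' hpk)
      have hdG1w : deg G1 w < d w := by
        have h := hdeg1 w
        rw [if_neg (fun h2 : w = u => huw h2.symm), if_neg (fun h2 : w = k => hkw h2.symm)] at h
        omega
      have hadjkp : G1.Adj k p := by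
        rw [hG1, flip_adj]
        exact Or.inr ⟨Sym2.eq_swap, hkp⟩
      obtain ⟨G2, r2, hmem2, hdeg2, -⟩ :=
        gadgetS S hmem1 k w p hk_cls hkw hdG1w hadjkp hpw
      refine ⟨G2, (r1.trans r2).mono (by omega), hmem2, ?_⟩
      have hnet : ∀ v, (deg G2 v : ℤ) = (deg G v : ℤ) - (if v = u then 1 else 0)
          + (if v = w then 1 else 0) := by
        intro v
        rw [hdeg2 v, hdeg1 v]
        split_ifs <;> omega
      have := devSum_eq_move huw hu hw hnet
      omega
    · -- cut = γ + 1 : steal a cut edge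
      have hcut_ne : cutCount V1 G ≠ 0 := by
        have := S.hγlo
        omega
      obtain ⟨a0, b0, hab0, ha0, hb0⟩ := exists_cut_edge hcut_ne
      obtain ⟨a, b, hab, hau, hbw⟩ : ∃ a b : Fin n, G.Adj a b ∧ (a ∈ V1 ↔ u ∈ V1) ∧
          (b ∈ V1 ↔ w ∈ V1) := by
        by_cases huV : u ∈ V1
        · have hwV : w ∉ V1 := fun h => hcross ⟨fun _ => h, fun _ => huV⟩
          exact ⟨a0, b0, hab0, by tauto, by tauto⟩
        · have hwV : w ∈ V1 := by
            by_contra h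
            exact hcross ⟨fun h2 => absurd h2 huV, fun h2 => absurd h2 h⟩
          exact ⟨b0, a0, hab0.symm, by tauto, by tauto⟩
      obtain ⟨x, q, hxq, hxC, hbx, hxb, hwq, hqw⟩ :=
        exists_good_pair S hG (cls V1 w) (cls_or V1 w) b w
      have hx_cls : x ∈ V1 ↔ w ∈ V1 := (mem_cls_iff V1 w x).mp hxC
      have hxw : x ≠ w := by
        rintro rfl
        exact hwq hxq
      have hnqw : ¬ G.Adj q w := fun h => hwq h.symm
      set G1 := flipG G x q w with hG1
      have hdeg1 : ∀ v, (deg G1 v : ℤ) = (deg G v : ℤ) - (if v = x then 1 else 0)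
          + (if v = w then 1 else 0) := flip_deg hxq hqw hnqw
      have hcut1 : cutCount V1 G1 = cutCount V1 G := by
        apply flip_cut_eq hxq hqw hnqw
        rw [cutP_iff, cutP_iff]
        tauto
      have hmem1 : memPAM' V1 γ d G1 := by
        refine memPAM'_of (flip_sum_eq hxq hqw hnqw hG) ?_ ?_
        · exact le_trans (devSum_le_move hxw hw hdeg1) (memPAM'_devSum hG)
        · rw [hcut1]
          exact hG.2.2
      have r1 : Reach V1 γ d G G1 1 := Reach.single hG hmem1 (flip_hinge hxq hqw hnqw)
      -- flip 2 : delete the cut edge {a,b}, add {b,x}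
      have hax : a ≠ x := by
        intro h
        apply hcross
        rw [h] at hau
        exact hau.symm.trans hx_cls
      have hadj2 : G1.Adj a b := by
        rw [hG1, flip_adj]
        refine Or.inl ⟨hab, ?_⟩
        intro hcon
        rw [Sym2.eq_iff] at hcon
        rcases hcon with ⟨h1, -⟩ | ⟨-, h2⟩
        · exact hax h1
        · exact hxb h2.symm
      have hbx2 : b ≠ x := fun h => hxb h.symm
      have hnadj2 : ¬ G1.Adj b x := by
        rw [hG1, flip_adj]
        rintro (⟨h, -⟩ | ⟨h, -⟩)
        · exact hbx h
        · rw [Sym2.eq_iff] at h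
          rcases h with ⟨-, h2⟩ | ⟨-, h2⟩
          · exact hxw h2
          · exact hxq.ne h2
      set G2 := flipG G1 a b x with hG2
      have hdeg2' : ∀ v, (deg G2 v : ℤ) = (deg G1 v : ℤ) - (if v = a then 1 else 0)
          + (if v = x then 1 else 0) := flip_deg hadj2 hbx2 hnadj2
      have hcutab : cutP V1 s(a, b) :=
        cutP_cross (fun h => hcross ((hau.symm.trans h).trans hbw))
      have hnbx : ¬ cutP V1 s(b, x) := not_cutP_same (hbw.trans hx_cls.symm)
      have hcut2 : (cutCount V1 G2 : ℤ) = (γ : ℤ) := by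
        have h := flip_cut hadj2 hbx2 hnadj2 V1
        rw [← hG2] at h
        rw [if_pos hcutab, if_neg hnbx, hcut1] at h
        omega
      have haw : a ≠ w := fun h => hcross ((h ▸ hau).symm)
      have hdeg2 : ∀ v, (deg G2 v : ℤ) = (deg G v : ℤ) - (if v = a then 1 else 0)
          + (if v = w then 1 else 0) := by
        intro v
        rw [hdeg2' v, hdeg1 v]
        split_ifs <;> omega
      have hmem2 : memPAM' V1 γ d G2 := by
        refine memPAM'_of (flip_sum_eq hadj2 hbx2 hnadj2 hmem1) ?_ ?_
        · exact le_trans (devSum_le_move haw hw hdeg2) (memPAM'_devSum hG)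
        · rw [hcut2]
          simp
      have r2 : Reach V1 γ d G G2 2 :=
        r1.trans (Reach.single hmem1 hmem2 (flip_hinge hadj2 hbx2 hnadj2))
      by_cases hAs : d a < deg G a
      · refine ⟨G2, r2.mono (by omega), hmem2, ?_⟩
        have := devSum_eq_move haw hAs hw hdeg2
        omega
      · push_neg at hAs
        have hau' : a ≠ u := by
          rintro rfl
          omega
        have hdG2a : deg G2 a < d a := by
          have h := hdeg2 a
          rw [if_pos rfl, if_neg haw] at h
          have h2 : (deg G a : ℤ) ≤ (d a : ℤ) := by exact_mod_cast hAs
          omega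
        have hdG2u : deg G2 u = deg G u := by
          have h := hdeg2 u
          rw [if_neg (fun h2 : u = a => hau' h2.symm), if_neg huw] at h
          omega
        have hu2 : d u < deg G2 u := by omega
        have hdegu2'' : 2 ≤ deg G2 u := by omega
        obtain ⟨p₀, hup', hpa'⟩ := exists_nbr_ne hdegu2'' a
        obtain ⟨G3, r3, hmem3, hdeg3, -⟩ := gadgetS S hmem2 u a p₀ hau.symm hau'.symm hdG2a hup' hpa'
        refine ⟨G3, (r2.trans r3).mono (by omega), hmem3, ?_⟩
        have hnet : ∀ v, (deg G3 v : ℤ) = (deg G v : ℤ) - (if v = u then 1 else 0)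
            + (if v = w then 1 else 0) := by
          intro v
          rw [hdeg3 v, hdeg2 v]
          split_ifs <;> omega
        have := devSum_eq_move huw hu hw hnet
        omega

end Unit



section Final

variable {n : ℕ} {α : ℝ} {V1 : Finset (Fin n)} {γ : ℕ} {d : Fin n → ℕ}
variable {G : SimpleGraph (Fin n)}

lemma devSum_nonneg : 0 ≤ devSum d G :=
  Finset.sum_nonneg (fun v _ => abs_nonneg _)

lemma devSum_zero (h : devSum d G ≤ 0) : ∀ v, deg G v = d v := by
  intro v
  have hz : devSum d G = 0 := le_antisymm h devSum_nonneg
  have := (Finset.sum_eq_zero_iff_of_nonneg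
    (fun v _ => abs_nonneg ((d v : ℤ) - (deg G v : ℤ)))).mp hz v (Finset.mem_univ v)
  have h2 : (d v : ℤ) = (deg G v : ℤ) := by
    have := abs_eq_zero.mp this
    omega
  exact_mod_cast h2.symm

lemma finishPAM (S : Setup n α V1 γ d) (hG : memPAM' V1 γ d G)
    (h0 : ∀ v, deg G v = d v) : memPAM V1 γ d G := by
  refine ⟨h0, ?_⟩
  obtain ⟨H, hHdeg, hHcut⟩ := S.hgraphical
  have p1 : ((cutCount V1 G : ℕ) : ZMod 2) = ((γ : ℕ) : ZMod 2) := by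
    calc ((cutCount V1 G : ℕ) : ZMod 2) = ((∑ v ∈ V1, deg G v : ℕ) : ZMod 2) :=
          cut_parity G V1
      _ = ((∑ v ∈ V1, d v : ℕ) : ZMod 2) := by
          rw [Finset.sum_congr rfl (fun v _ => h0 v)]
      _ = ((∑ v ∈ V1, deg H v : ℕ) : ZMod 2) := by
          rw [Finset.sum_congr rfl (fun v _ => hHdeg v)]
      _ = ((cutCount V1 H : ℕ) : ZMod 2) := (cut_parity H V1).symm
      _ = ((γ : ℕ) : ZMod 2) := by rw [hHcut]
  have p2 : cutCount V1 G ≡ γ [MOD 2] := (ZMod.natCast_eq_natCast_iff _ _ _).mp p1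
  have hband := hG.2.2
  simp only [Int.abs_eq_natAbs] at hband
  unfold Nat.ModEq at p2
  omega

lemma assemble {G' : SimpleGraph (Fin n)} {c : ℕ} (hr : Reach V1 γ d G G' c) (hc : c ≤ 9)
    (hmem : memPAM V1 γ d G') :
    ∃ t ≤ 9, ∃ f : ℕ → SimpleGraph (Fin n), f 0 = G ∧
      (∀ i ≤ t, memPAM' V1 γ d (f i)) ∧
      (∀ i < t, hingeFlip (f i) (f (i+1))) ∧
      memPAM V1 γ d (f t) := by
  obtain ⟨t, ht, f, hf0, hft, hfm, hfs⟩ := hr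
  exact ⟨t, by omega, f, hf0, hfm, hfs, hft ▸ hmem⟩

end Final


end PamAux

open PamAux

/-- Theorem D.3, sparse irregular families. Fix `0 < α < 1/2`.
For any graphical two-class PAM instance with `|V₁|, |V₂| ≥ αn`,
`2 ≤ dᵢ ≤ √(αn/4)` for all `i`, and `1 ≤ γ ≤ αn/2`, every `G ∈ 𝒢'(γ,d)` can be
transformed into an element of `𝒢(γ,d)` by at most `9` hinge flips, all
intermediate graphs staying in `𝒢'(γ,d)`; i.e. this family is strongly stable
with constant `k = 9` for the hinge-flip chain. -/
theorem stmt15 {n : ℕ} (α : ℝ) (hα0 : 0 < α) (hα1 : α < 1 / 2)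
    (V1 : Finset (Fin n)) (γ : ℕ) (d : Fin n → ℕ)
    (hV1ne : V1.Nonempty) (hV2ne : V1ᶜ.Nonempty)
    (hV1 : α * n ≤ (V1.card : ℝ)) (hV2 : α * n ≤ ((V1ᶜ : Finset (Fin n)).card : ℝ))
    (hdlo : ∀ i, 2 ≤ d i) (hdhi : ∀ i, ((d i : ℝ)) ^ 2 ≤ α * n / 4)
    (hγlo : 1 ≤ γ) (hγhi : (γ : ℝ) ≤ α * n / 2)
    (hgraphical : ∃ H : SimpleGraph (Fin n), memPAM V1 γ d H) :
    ∀ G : SimpleGraph (Fin n), memPAM' V1 γ d G →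
      ∃ t ≤ 9, ∃ f : ℕ → SimpleGraph (Fin n), f 0 = G ∧
        (∀ i ≤ t, memPAM' V1 γ d (f i)) ∧
        (∀ i < t, hingeFlip (f i) (f (i+1))) ∧
        memPAM V1 γ d (f t) := by
  intro G hG
  have S : Setup n α V1 γ d :=
    ⟨hα0, hα1, hV1ne, hV2ne, hV1, hV2, hdlo, hdhi, hγlo, hγhi, hgraphical⟩
  by_cases h0 : ∀ v, deg G v = d v
  · exact assemble (Reach.refl hG) (by omega) (finishPAM S hG h0)
  · obtain ⟨G1, r1, hmem1, hdev1⟩ := unit S hG h0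
    by_cases h1 : ∀ v, deg G1 v = d v
    · exact assemble r1 (by omega) (finishPAM S hmem1 h1)
    · obtain ⟨G2, r2, hmem2, hdev2⟩ := unit S hmem1 h1
      have h2 : ∀ v, deg G2 v = d v := by
        apply devSum_zero
        have h4 := memPAM'_devSum hG
        omega
      exact assemble (r1.trans r2) (by omega) (finishPAM S hmem2 h2)
end

section
/- For every {a,b}-mountain P with first top t, there exists a traversal of P. -/
/-- The vertex set: pairs `(i,j)` with `i ∈ [a,t]`, `j ∈ [t,b]` and `P i + P j = P t`. -/
noncomputable def mtnS (a b t : ℤ) (P : ℤ → ℤ) : Finset (ℤ × ℤ) :=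
  ((Finset.Icc a t) ×ˢ (Finset.Icc t b)).filter (fun p => P p.1 + P p.2 = P t)

lemma mem_mtnS {a b t : ℤ} {P : ℤ → ℤ} {p : ℤ × ℤ} :
    p ∈ mtnS a b t P ↔ a ≤ p.1 ∧ p.1 ≤ t ∧ t ≤ p.2 ∧ p.2 ≤ b ∧ P p.1 + P p.2 = P t := by
  simp only [mtnS, Finset.mem_filter, Finset.mem_product, Finset.mem_Icc]
  tauto

/-- The graph of simultaneous moves. -/
def mtnG (a b t : ℤ) (P : ℤ → ℤ) : SimpleGraph ↥(mtnS a b t P) where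
  Adj u v := |(u : ℤ × ℤ).1 - (v : ℤ × ℤ).1| = 1 ∧ |(u : ℤ × ℤ).2 - (v : ℤ × ℤ).2| = 1
  symm := by
    constructor
    rintro u v ⟨h1, h2⟩
    exact ⟨by rw [abs_sub_comm]; exact h1, by rw [abs_sub_comm]; exact h2⟩
  loopless := by constructor; rintro u ⟨h1, h2⟩; simp at h1

instance (a b t : ℤ) (P : ℤ → ℤ) : DecidableRel (mtnG a b t P).Adj :=
  fun _ _ => instDecidableAnd

def mtnU1 (a t : ℤ) (P : ℤ → ℤ) (i : ℤ) : Finset ℤ :=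
  ({i - 1, i + 1} : Finset ℤ).filter (fun x => a ≤ x ∧ x ≤ t ∧ P x = P i + 1)

def mtnD1 (a t : ℤ) (P : ℤ → ℤ) (i : ℤ) : Finset ℤ :=
  ({i - 1, i + 1} : Finset ℤ).filter (fun x => a ≤ x ∧ x ≤ t ∧ P x = P i - 1)

def mtnU2 (t b : ℤ) (P : ℤ → ℤ) (j : ℤ) : Finset ℤ :=
  ({j - 1, j + 1} : Finset ℤ).filter (fun y => t ≤ y ∧ y ≤ b ∧ P y = P j + 1)

def mtnD2 (t b : ℤ) (P : ℤ → ℤ) (j : ℤ) : Finset ℤ :=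
  ({j - 1, j + 1} : Finset ℤ).filter (fun y => t ≤ y ∧ y ≤ b ∧ P y = P j - 1)

lemma mtn_even_helper (x y z w : ℕ) (h1 : x + y = 2) (h2 : z + w = 2) :
    Even (x * w + y * z) := by
  have hx : x ≤ 2 := by omega
  have hz : z ≤ 2 := by omega
  interval_cases x <;> interval_cases z <;> simp [Nat.even_iff] <;> omega

/-- Lemma on the mountain-climbing problem, cf. Bhatnagar et
al.. Every `{a,b}`-mountain `P` with first top `t` admits a traversal: a
sequence of pairs starting at `(a,t)` and ending at `(t,b)`, moving by one on
each coordinate at every step, keeping `P(i) + P(j) = P(t)`, the first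
coordinate in `[a,t]` and the second in `[t,b]`. -/
theorem stmt18 (a b t : ℤ) (P : ℤ → ℤ)
    (hab : a + 1 < b)
    (hPa : P a = 0) (hPb : P b = 0)
    (hpos : ∀ i, a < i → i < b → 0 < P i)
    (hstep : ∀ i, a ≤ i → i < b → |P (i + 1) - P i| = 1)
    (hta : a ≤ t) (htb : t ≤ b)
    (htmax : ∀ i, a ≤ i → i ≤ b → P i ≤ P t)
    (htfirst : ∀ i, a ≤ i → i < t → P i < P t) :
    ∃ (k : ℕ) (g : ℕ → ℤ × ℤ), 1 ≤ k ∧ g 0 = (a, t) ∧ g (k - 1) = (t, b) ∧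
      ∀ s : ℕ, s + 1 < k →
        |(g (s + 1)).1 - (g s).1| = 1 ∧ |(g (s + 1)).2 - (g s).2| = 1 ∧
        P (g s).1 + P (g s).2 = P t ∧
        a ≤ (g s).1 ∧ (g s).1 ≤ t ∧ t ≤ (g s).2 ∧ (g s).2 ≤ b := by
  classical
  set S := mtnS a b t P with hSdef
  set G := mtnG a b t P with hGdef
  -- basic slope facts
  have hslope : ∀ i, a ≤ i → i < b → P (i + 1) = P i + 1 ∨ P (i + 1) = P i - 1 := by
    intro i h1 h2
    have h := hstep i h1 h2
    rcases (abs_eq (by norm_num : (0:ℤ) ≤ 1)).1 h with h' | h'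
    · left; omega
    · right; omega
  have hPa1 : P (a + 1) = 1 := by
    have h2 := hpos (a + 1) (by omega) hab
    rcases hslope a le_rfl (by omega) with h | h <;> omega
  have hHpos : 0 < P t := by
    have := htmax (a + 1) (by omega) (by omega)
    omega
  have halt : a < t := by
    rcases eq_or_lt_of_le hta with h | h
    · exfalso; rw [← h] at hHpos; omega
    · exact h
  have htlb : t < b := by
    rcases eq_or_lt_of_le htb with h | h
    · exfalso; rw [h] at hHpos; omega
    · exact h
  have hPt1 : P (t + 1) = P t - 1 := by
    have hm := htmax (t + 1) (by omega) (by omega)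
    rcases hslope t (by omega) htlb with h | h <;> omega
  have hPtm : P (t - 1) = P t - 1 := by
    have h := hslope (t - 1) (by omega) (by omega)
    rw [show t - 1 + 1 = t from by ring] at h
    have := htfirst (t - 1) (by omega) (by omega)
    omega
  have hPbm : P (b - 1) = 1 := by
    have h := hslope (b - 1) (by omega) (by omega)
    rw [show b - 1 + 1 = b from by ring] at h
    have := hpos (b - 1) (by omega) (by omega)
    omega
  -- key memberships
  have hmemat : ((a, t) : ℤ × ℤ) ∈ S := by
    rw [hSdef, mem_mtnS]
    exact ⟨le_rfl, hta, le_rfl, htb, by rw [hPa]; ring⟩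
  -- degree as a count in ℤ × ℤ
  have hdeg : ∀ (i j : ℤ) (hv : ((i, j) : ℤ × ℤ) ∈ S),
      G.degree ⟨(i, j), hv⟩ =
        (S.filter (fun q => |i - q.1| = 1 ∧ |j - q.2| = 1)).card := by
    intro i j hv
    rw [← SimpleGraph.card_neighborFinset_eq_degree]
    refine Finset.card_bij (fun w _ => (w : ℤ × ℤ)) ?_ ?_ ?_
    · intro w hw
      rw [SimpleGraph.mem_neighborFinset] at hw
      exact Finset.mem_filter.mpr ⟨w.2, hw⟩
    · intro w1 _ w2 _ h
      exact Subtype.ext h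
    · intro q hq
      obtain ⟨hq1, hq2⟩ := Finset.mem_filter.mp hq
      refine ⟨⟨q, hq1⟩, ?_, rfl⟩
      rw [SimpleGraph.mem_neighborFinset]
      exact hq2
  -- neighbor set decomposition
  have hN : ∀ (i j : ℤ), ((i, j) : ℤ × ℤ) ∈ S →
      S.filter (fun q => |i - q.1| = 1 ∧ |j - q.2| = 1) =
        (mtnU1 a t P i ×ˢ mtnD2 t b P j) ∪ (mtnD1 a t P i ×ˢ mtnU2 t b P j) := by
    intro i j hv
    rw [hSdef, mem_mtnS] at hv
    obtain ⟨hva, hvt1, hvt2, hvb, hvsum⟩ := hv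
    replace hva : a ≤ i := hva
    replace hvt1 : i ≤ t := hvt1
    replace hvt2 : t ≤ j := hvt2
    replace hvb : j ≤ b := hvb
    replace hvsum : P i + P j = P t := hvsum
    ext q
    simp only [Finset.mem_filter, Finset.mem_union, Finset.mem_product, mtnU1, mtnD1,
      mtnU2, mtnD2, Finset.mem_insert, Finset.mem_singleton, hSdef, mem_mtnS]
    constructor
    · rintro ⟨⟨hqa, hqt1, hqt2, hqb, hqsum⟩, habs1, habs2⟩
      have hx : q.1 = i + 1 ∨ q.1 = i - 1 := by
        rcases (abs_eq (by norm_num : (0:ℤ) ≤ 1)).1 habs1 with h | h <;> omega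
      have hy : q.2 = j + 1 ∨ q.2 = j - 1 := by
        rcases (abs_eq (by norm_num : (0:ℤ) ≤ 1)).1 habs2 with h | h <;> omega
      have hPx : P q.1 = P i + 1 ∨ P q.1 = P i - 1 := by
        rcases hx with h | h
        · rw [h]; exact hslope i hva (by omega)
        · have h' := hslope q.1 (by omega) (by omega)
          rw [show q.1 + 1 = i from by omega] at h'
          omega
      have hPy : P q.2 = P j + 1 ∨ P q.2 = P j - 1 := by
        rcases hy with h | h
        · rw [h]; exact hslope j (by omega) (by omega)
        · have h' := hslope q.2 (by omega) (by omega)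
          rw [show q.2 + 1 = j from by omega] at h'
          omega
      omega
    · rintro (⟨⟨hx1, hxa, hxt, hxP⟩, ⟨hy1, hyt, hyb, hyP⟩⟩ |
              ⟨⟨hx1, hxa, hxt, hxP⟩, ⟨hy1, hyt, hyb, hyP⟩⟩) <;>
      refine ⟨⟨hxa, hxt, hyt, hyb, by omega⟩, ?_, ?_⟩ <;>
      rw [abs_eq (by norm_num : (0:ℤ) ≤ 1)] <;> omega
  have hcard : ∀ (i j : ℤ) (hv : ((i, j) : ℤ × ℤ) ∈ S),
      G.degree ⟨(i, j), hv⟩ =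
        (mtnU1 a t P i).card * (mtnD2 t b P j).card +
        (mtnD1 a t P i).card * (mtnU2 t b P j).card := by
    intro i j hv
    rw [hdeg i j hv, hN i j hv, Finset.card_union_of_disjoint, Finset.card_product,
      Finset.card_product]
    rw [Finset.disjoint_left]
    rintro ⟨x, y⟩ hx hy
    simp only [Finset.mem_product, mtnU1, mtnD1, mtnU2, mtnD2, Finset.mem_filter,
      Finset.mem_insert, Finset.mem_singleton] at hx hy
    omega
  -- counting lemmas
  have hU1a : mtnU1 a t P a = {a + 1} := by
    ext x
    simp only [mtnU1, Finset.mem_filter, Finset.mem_insert, Finset.mem_singleton]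
    constructor
    · rintro ⟨rfl | rfl, h⟩ <;> omega
    · rintro rfl; exact ⟨Or.inr rfl, by omega, by omega, by omega⟩
  have hD1a : mtnD1 a t P a = ∅ := by
    ext x
    simp only [mtnD1, Finset.mem_filter, Finset.mem_insert, Finset.mem_singleton,
      Finset.notMem_empty, iff_false, not_and]
    rintro (rfl | rfl) <;> intro h <;> omega
  have hU2t : mtnU2 t b P t = ∅ := by
    ext y
    simp only [mtnU2, Finset.mem_filter, Finset.mem_insert, Finset.mem_singleton,
      Finset.notMem_empty, iff_false, not_and]
    rintro (rfl | rfl) <;> intro h <;> omega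
  have hD2t : mtnD2 t b P t = {t + 1} := by
    ext y
    simp only [mtnD2, Finset.mem_filter, Finset.mem_insert, Finset.mem_singleton]
    constructor
    · rintro ⟨rfl | rfl, h⟩ <;> omega
    · rintro rfl; exact ⟨Or.inr rfl, by omega, by omega, by omega⟩
  have hsum1 : ∀ i, a < i → i < t →
      (mtnU1 a t P i).card + (mtnD1 a t P i).card = 2 := by
    intro i h1 h2
    have hdisj : Disjoint (mtnU1 a t P i) (mtnD1 a t P i) := by
      rw [Finset.disjoint_left]
      intro x hx hy
      simp only [mtnU1, mtnD1, Finset.mem_filter] at hx hy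
      omega
    have hun : mtnU1 a t P i ∪ mtnD1 a t P i = {i - 1, i + 1} := by
      ext x
      simp only [mtnU1, mtnD1, Finset.mem_union, Finset.mem_filter, Finset.mem_insert,
        Finset.mem_singleton]
      constructor
      · rintro (⟨h, _⟩ | ⟨h, _⟩) <;> exact h
      · rintro (rfl | rfl)
        · have h' := hslope (i - 1) (by omega) (by omega)
          rw [show i - 1 + 1 = i from by ring] at h'
          rcases h' with h' | h'
          · right; exact ⟨Or.inl rfl, by omega, by omega, by omega⟩
          · left; exact ⟨Or.inl rfl, by omega, by omega, by omega⟩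
        · rcases hslope i (by omega) (by omega) with h' | h'
          · left; exact ⟨Or.inr rfl, by omega, by omega, by omega⟩
          · right; exact ⟨Or.inr rfl, by omega, by omega, by omega⟩
    have hcu := Finset.card_union_of_disjoint hdisj
    rw [hun] at hcu
    have h2' : ({i - 1, i + 1} : Finset ℤ).card = 2 := by
      rw [Finset.card_insert_of_notMem (by simp; omega), Finset.card_singleton]
    omega
  have hsum2 : ∀ j, t < j → j < b →
      (mtnU2 t b P j).card + (mtnD2 t b P j).card = 2 := by
    intro j h1 h2
    have hdisj : Disjoint (mtnU2 t b P j) (mtnD2 t b P j) := by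
      rw [Finset.disjoint_left]
      intro y hy hy'
      simp only [mtnU2, mtnD2, Finset.mem_filter] at hy hy'
      omega
    have hun : mtnU2 t b P j ∪ mtnD2 t b P j = {j - 1, j + 1} := by
      ext y
      simp only [mtnU2, mtnD2, Finset.mem_union, Finset.mem_filter, Finset.mem_insert,
        Finset.mem_singleton]
      constructor
      · rintro (⟨h, _⟩ | ⟨h, _⟩) <;> exact h
      · rintro (rfl | rfl)
        · have h' := hslope (j - 1) (by omega) (by omega)
          rw [show j - 1 + 1 = j from by ring] at h'
          rcases h' with h' | h'
          · right; exact ⟨Or.inl rfl, by omega, by omega, by omega⟩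
          · left; exact ⟨Or.inl rfl, by omega, by omega, by omega⟩
        · rcases hslope j (by omega) (by omega) with h' | h'
          · left; exact ⟨Or.inr rfl, by omega, by omega, by omega⟩
          · right; exact ⟨Or.inr rfl, by omega, by omega, by omega⟩
    have hcu := Finset.card_union_of_disjoint hdisj
    rw [hun] at hcu
    have h2' : ({j - 1, j + 1} : Finset ℤ).card = 2 := by
      rw [Finset.card_insert_of_notMem (by simp; omega), Finset.card_singleton]
    omega
  have hU2H : ∀ j, t < j → j < b → P j = P t → mtnU2 t b P j = ∅ := by
    intro j h1 h2 h3
    ext y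
    simp only [mtnU2, Finset.mem_filter, Finset.mem_insert, Finset.mem_singleton,
      Finset.notMem_empty, iff_false, not_and]
    rintro (rfl | rfl) <;> intro h4 h5 h6
    · have := htmax (j - 1) (by omega) h5; omega
    · have := htmax (j + 1) (by omega) h5; omega
  -- classification of odd-degree vertices
  have hclass : ∀ (i j : ℤ) (hv : ((i, j) : ℤ × ℤ) ∈ S),
      Odd (G.degree ⟨(i, j), hv⟩) → (i = a ∧ j = t) ∨ (i = t ∧ j = b) := by
    intro i j hv hodd
    have hv' := hv
    rw [hSdef, mem_mtnS] at hv'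
    obtain ⟨hva, hvt1, hvt2, hvb, hvsum⟩ := hv'
    replace hva : a ≤ i := hva
    replace hvt1 : i ≤ t := hvt1
    replace hvt2 : t ≤ j := hvt2
    replace hvb : j ≤ b := hvb
    replace hvsum : P i + P j = P t := hvsum
    rw [hcard i j hv] at hodd
    rcases eq_or_lt_of_le hva with hia | hia
    · -- i = a
      rcases eq_or_lt_of_le hvt2 with hjt | hjt
      · exact Or.inl ⟨hia.symm, hjt.symm⟩
      · exfalso
        have hPia : P i = 0 := by rw [← hia, hPa]
        have hjb : j < b := by
          rcases eq_or_lt_of_le hvb with h | h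
          · exfalso; rw [h] at hvsum; omega
          · exact h
        have hU2 := hU2H j hjt hjb (by omega)
        have h2 := hsum2 j hjt hjb
        rw [hU2, Finset.card_empty] at h2 hodd
        rw [show (mtnD2 t b P j).card = 2 from by omega] at hodd
        simp only [mul_zero, add_zero] at hodd
        rcases hodd with ⟨m, hm⟩
        omega
    · rcases eq_or_lt_of_le hvt1 with hit | hit
      · -- i = t
        right
        refine ⟨hit, ?_⟩
        have hPj : P j = 0 := by rw [hit] at hvsum; omega
        rcases eq_or_lt_of_le hvb with h | h
        · exact h
        · exfalso
          rcases eq_or_lt_of_le hvt2 with h' | h'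
          · rw [← h'] at hPj; omega
          · have := hpos j (by omega) h; omega
      · -- a < i < t, so j must be interior
        exfalso
        have hjt : t < j := by
          rcases eq_or_lt_of_le hvt2 with h | h
          · exfalso
            rw [← h] at hvsum
            have := hpos i (by omega) (by omega)
            omega
          · exact h
        have hjb : j < b := by
          rcases eq_or_lt_of_le hvb with h | h
          · exfalso
            rw [h, hPb] at hvsum
            have := htfirst i (by omega) hit
            omega
          · exact h
        have h1 := hsum1 i hia hit
        have h2 := hsum2 j hjt hjb
        have heven := mtn_even_helper _ _ _ _ h1 h2
        exact (Nat.not_even_iff_odd.mpr hodd) heven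
  -- degree of the start vertex is 1
  have hdegstart : G.degree ⟨(a, t), hmemat⟩ = 1 := by
    rw [hcard a t hmemat, hU1a, hD1a, hU2t, hD2t]
    simp
  -- the component subgraph
  let v0 : ↥S := ⟨(a, t), hmemat⟩
  let G' : SimpleGraph ↥S :=
    { Adj := fun u w => G.Adj u w ∧ G.Reachable v0 u ∧ G.Reachable v0 w,
      symm := by constructor; rintro u w ⟨h1, h2, h3⟩; exact ⟨h1.symm, h3, h2⟩,
      loopless := by constructor; rintro u ⟨h1, _⟩; exact G.loopless.irrefl u h1 }
  haveI : DecidableRel G'.Adj := fun u w => instDecidableAnd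
  have hGG' : ∀ u, G.Reachable v0 u → G'.neighborFinset u = G.neighborFinset u := by
    intro u hu
    ext w
    rw [SimpleGraph.mem_neighborFinset, SimpleGraph.mem_neighborFinset]
    constructor
    · rintro ⟨h, _⟩; exact h
    · intro h; exact ⟨h, hu, hu.trans h.reachable⟩
  have hdeg' : ∀ u, G.Reachable v0 u → G'.degree u = G.degree u := by
    intro u hu
    rw [← SimpleGraph.card_neighborFinset_eq_degree,
      ← SimpleGraph.card_neighborFinset_eq_degree, hGG' u hu]
  have hodd0 : Odd (G'.degree v0) := by
    rw [hdeg' v0 (SimpleGraph.Reachable.refl v0), hdegstart]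
    exact odd_one
  obtain ⟨w, hwne, hwodd⟩ := G'.exists_ne_odd_degree_of_exists_odd_degree v0 hodd0
  have hwreach : G.Reachable v0 w := by
    have hp : 0 < G'.degree w := hwodd.pos
    rw [← SimpleGraph.card_neighborFinset_eq_degree, Finset.card_pos] at hp
    obtain ⟨u, hu⟩ := hp
    rw [SimpleGraph.mem_neighborFinset] at hu
    exact hu.2.1
  have hwG : Odd (G.degree w) := by rw [← hdeg' w hwreach]; exact hwodd
  obtain ⟨⟨wi, wj⟩, hw⟩ := w
  rcases hclass wi wj hw hwG with ⟨h1, h2⟩ | ⟨h1, h2⟩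
  · exact absurd (Subtype.ext (by rw [h1, h2] : ((wi, wj) : ℤ × ℤ) = ((a, t) : ℤ × ℤ))) hwne
  · -- we have reachability from (a,t) to (t,b): extract a walk
    obtain ⟨wk⟩ := hwreach
    refine ⟨wk.length + 1, fun s => ((wk.getVert s : ↥S) : ℤ × ℤ), by omega, ?_, ?_, ?_⟩
    · show ((wk.getVert 0 : ↥S) : ℤ × ℤ) = (a, t)
      exact congrArg Subtype.val (SimpleGraph.Walk.getVert_zero wk)
    · show ((wk.getVert wk.length : ↥S) : ℤ × ℤ) = (t, b)
      refine (congrArg Subtype.val (SimpleGraph.Walk.getVert_length wk)).trans ?_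
      show ((wi, wj) : ℤ × ℤ) = (t, b)
      exact Prod.ext h1 h2
    · intro s hs
      have hadj := wk.adj_getVert_succ (by omega : s < wk.length)
      obtain ⟨hm1, hm2, hm3, hm4, hm5⟩ := mem_mtnS.mp (wk.getVert s).2
      exact ⟨by rw [abs_sub_comm]; exact hadj.1, by rw [abs_sub_comm]; exact hadj.2,
        hm5, hm1, hm2, hm3, hm4⟩
end
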